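/- arXiv:2507.12147 — 3 statements merged into one kernel-verified Lean document; each statement's English description precedes it below -/
import Mathlib

section
/- Let r ≥ 0. There exist constants ε₀ > 0 and C > 0, depending only on r, σ₁, σ₂, such that for every μ ∈ ℂ with Im μ > −r satisfying γ₁(μ) ≤ ε₀ and γ₂(μ) ≤ ε₀: if (v₁,v₂) is a solution of the Dirac system with parameter μ satisfying v₁(0) = 0 and v₂(1) = 1, then v₂(0) ≠ 0 and |e^{iμ}/v₂(0) − 1 − (K₂e)(0)| ≤ C γ̃(μ). -/
open MeasureTheory Set
open scoped ENNReal

noncomputable section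

/-- The integral operator `K₁` associated with the Dirac system. -/
def K1 (σ₁ σ₂ : ℝ → ℂ) (μ : ℂ) (z : ℝ → ℂ) : ℝ → ℂ := fun x =>
  ∫ t in (0:ℝ)..x, σ₁ t * ∫ s in t..(1:ℝ),
    Complex.exp (2 * Complex.I * μ * (s - t)) * σ₂ s * z s

/-- The integral operator `K₂` associated with the Dirac system. -/
def K2 (σ₁ σ₂ : ℝ → ℂ) (μ : ℂ) (z : ℝ → ℂ) : ℝ → ℂ := fun x =>
  ∫ t in x..(1:ℝ), σ₂ t * ∫ s in (0:ℝ)..t,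
    Complex.exp (2 * Complex.I * μ * (t - s)) * σ₁ s * z s

/-- `γ₀₁(x,μ) = |∫₀ˣ e^{2iμ(x−t)} σ₁(t) dt|`. -/
def gamma01 (σ₁ : ℝ → ℂ) (μ : ℂ) (x : ℝ) : ℝ :=
  ‖∫ t in (0:ℝ)..x, Complex.exp (2 * Complex.I * μ * (x - t)) * σ₁ t‖

/-- `γ₀₂(x,μ) = |∫ₓ¹ e^{2iμ(t−x)} σ₂(t) dt|`. -/
def gamma02 (σ₂ : ℝ → ℂ) (μ : ℂ) (x : ℝ) : ℝ :=
  ‖∫ t in x..(1:ℝ), Complex.exp (2 * Complex.I * μ * (t - x)) * σ₂ t‖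

/-- `γ₁(μ) = ‖γ₀₁(·,μ)‖_{L^q[0,1]}`. -/
def gamma1 (σ₁ : ℝ → ℂ) (q : ℝ≥0∞) (μ : ℂ) : ℝ :=
  (eLpNorm (fun x => gamma01 σ₁ μ x) q (volume.restrict (Icc (0:ℝ) 1))).toReal

/-- `γ₂(μ) = ‖γ₀₂(·,μ)‖_{L^q[0,1]}`. -/
def gamma2 (σ₂ : ℝ → ℂ) (q : ℝ≥0∞) (μ : ℂ) : ℝ :=
  (eLpNorm (fun x => gamma02 σ₂ μ x) q (volume.restrict (Icc (0:ℝ) 1))).toReal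

/-- `γ̃(μ) = ∫₀¹ |σ₂| γ₀₁² + ∫₀¹ |σ₁| γ₀₂²`. -/
def gammaT (σ₁ σ₂ : ℝ → ℂ) (μ : ℂ) : ℝ :=
  (∫ s in (0:ℝ)..1, ‖σ₂ s‖ * (gamma01 σ₁ μ s) ^ 2)
    + ∫ s in (0:ℝ)..1, ‖σ₁ s‖ * (gamma02 σ₂ μ s) ^ 2

/-- `‖σ‖_{L^p[0,1]}` where `σ(x) = max(|σ₁(x)|,|σ₂(x)|)`. -/
def sigmaNorm (σ₁ σ₂ : ℝ → ℂ) (p : ℝ≥0∞) : ℝ :=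
  (eLpNorm (fun x => max ‖σ₁ x‖ ‖σ₂ x‖) p (volume.restrict (Icc (0:ℝ) 1))).toReal

/-- The constant function `1` on `[0,1]`. -/
def eFun : ℝ → ℂ := fun _ => 1

/-- A solution of the Dirac system `y₁' + σ₁ y₂ = iμ y₁`, `y₂' + σ₂ y₁ = −iμ y₂` on `[0,1]`,
with `y₁, y₂` absolutely continuous (i.e. in `W^{1,1}[0,1]`, so each is the indefinite
integral of an integrable function, and the equations hold a.e. with those derivatives). -/
def IsDiracSolution (σ₁ σ₂ : ℝ → ℂ) (μ : ℂ) (y₁ y₂ : ℝ → ℂ) : Prop :=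
  ∃ g₁ g₂ : ℝ → ℂ,
    IntervalIntegrable g₁ volume 0 1 ∧ IntervalIntegrable g₂ volume 0 1 ∧
    (∀ x ∈ Icc (0:ℝ) 1, y₁ x = y₁ 0 + ∫ t in (0:ℝ)..x, g₁ t) ∧
    (∀ x ∈ Icc (0:ℝ) 1, y₂ x = y₂ 0 + ∫ t in (0:ℝ)..x, g₂ t) ∧
    (∀ᵐ x ∂(volume.restrict (Icc (0:ℝ) 1)),
      g₁ x + σ₁ x * y₂ x = Complex.I * μ * y₁ x) ∧
    (∀ᵐ x ∂(volume.restrict (Icc (0:ℝ) 1)),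
      g₂ x + σ₂ x * y₁ x = -(Complex.I * μ) * y₂ x)


/-- Triangle Fubini: swap order of integration over a triangle. -/
lemma tri_swap {f g : ℝ → ℂ} {a b : ℝ} (hab : a ≤ b)
    (hf : IntegrableOn f (Ioc a b)) (hg : IntegrableOn g (Ioc a b)) :
    ∫ s in a..b, f s * ∫ τ in s..b, g τ = ∫ τ in a..b, (∫ s in a..τ, f s) * g τ := by
  set μ0 := volume.restrict (Ioc a b) with hμ0
  have hmeas : MeasurableSet {p : ℝ × ℝ | p.1 < p.2} :=
    (isOpen_lt continuous_fst continuous_snd).measurableSet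
  set F : ℝ → ℝ → ℂ := fun s τ => ({p : ℝ × ℝ | p.1 < p.2}.indicator
      (fun p => f p.1 * g p.2) (s, τ)) with hF
  have hInt : Integrable (Function.uncurry F) (μ0.prod μ0) := by
    have : Function.uncurry F = {p : ℝ × ℝ | p.1 < p.2}.indicator
        (fun p => f p.1 * g p.2) := by
      ext p; simp [Function.uncurry, hF]
    rw [this]
    exact (Integrable.mul_prod hf hg).indicator hmeas
  have swap := MeasureTheory.integral_integral_swap hInt
  have hL : (∫ s, (∫ τ, F s τ ∂μ0) ∂μ0) = ∫ s in a..b, f s * ∫ τ in s..b, g τ := by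
    rw [intervalIntegral.integral_of_le hab]
    apply setIntegral_congr_fun measurableSet_Ioc
    intro s hs
    show (∫ τ, F s τ ∂μ0) = f s * ∫ τ in s..b, g τ
    have h1 : (fun τ => F s τ) = (Ioi s).indicator (fun τ => f s * g τ) := by
      ext τ
      by_cases h : s < τ <;> simp [hF, indicator, h, mem_Ioi]
    rw [h1, integral_indicator measurableSet_Ioi, hμ0,
      Measure.restrict_restrict measurableSet_Ioi]
    have h2 : Ioi s ∩ Ioc a b = Ioc s b := by
      ext τ; simp only [mem_inter_iff, mem_Ioi, mem_Ioc]
      constructor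
      · rintro ⟨h3, h4, h5⟩; exact ⟨h3, h5⟩
      · rintro ⟨h3, h4⟩; exact ⟨h3, hs.1.trans h3, h4⟩
    rw [h2, intervalIntegral.integral_of_le hs.2, ← integral_const_mul]
  have hR : (∫ τ, (∫ s, F s τ ∂μ0) ∂μ0) = ∫ τ in a..b, (∫ s in a..τ, f s) * g τ := by
    rw [intervalIntegral.integral_of_le hab]
    apply setIntegral_congr_fun measurableSet_Ioc
    intro τ hτ
    show (∫ s, F s τ ∂μ0) = (∫ s in a..τ, f s) * g τ
    have h1 : (fun s => F s τ) = (Iio τ).indicator (fun s => f s * g τ) := by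
      ext s
      by_cases h : s < τ <;> simp [hF, indicator, h, mem_Iio]
    rw [h1, integral_indicator measurableSet_Iio, hμ0,
      Measure.restrict_restrict measurableSet_Iio]
    have h2 : Iio τ ∩ Ioc a b = Ioo a τ ∪ (Ioc τ b ∩ Iio τ) := by
      ext s; simp only [mem_inter_iff, mem_Iio, mem_Ioc, mem_Ioo, mem_union]
      constructor
      · rintro ⟨h3, h4, h5⟩; left; exact ⟨h4, h3⟩
      · rintro (⟨h4, h3⟩ | ⟨⟨h4, h5⟩, h3⟩)
        · exact ⟨h3, h4, h3.le.trans hτ.2⟩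
        · exact ⟨h3, hτ.1.trans h4, h5⟩
    have h2' : Iio τ ∩ Ioc a b = Ioo a τ := by
      rw [h2]
      have : Ioc τ b ∩ Iio τ = ∅ := by
        ext s; simp only [mem_inter_iff, mem_Ioc, mem_Iio, mem_empty_iff_false, iff_false]
        rintro ⟨⟨h4, h5⟩, h3⟩; exact absurd (h4.trans h3) (lt_irrefl τ)
      rw [this, union_empty]
    rw [h2', intervalIntegral.integral_of_le hτ.1.le,
      ← MeasureTheory.integral_Ioc_eq_integral_Ioo, ← integral_mul_const]
  rw [← hL, ← hR, swap]

lemma cexp_cont' (lam : ℂ) : Continuous fun t : ℝ => Complex.exp (lam * t) :=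
  Complex.continuous_exp.comp (continuous_const.mul Complex.continuous_ofReal)

lemma uIcc_sub {x y : ℝ} (hx : x ∈ Icc (0:ℝ) 1) (hy : y ∈ Icc (0:ℝ) 1) :
    uIcc x y ⊆ Icc (0:ℝ) 1 := by
  have h : uIcc (0:ℝ) 1 = Icc 0 1 := uIcc_of_le zero_le_one
  rw [← h]
  exact uIcc_subset_uIcc (by rw [h]; exact hx) (by rw [h]; exact hy)

lemma uIoc_sub {x y : ℝ} (hx : x ∈ Icc (0:ℝ) 1) (hy : y ∈ Icc (0:ℝ) 1) :
    uIoc x y ⊆ Icc (0:ℝ) 1 :=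
  fun t ht => uIcc_sub hx hy (uIoc_subset_uIcc ht)


lemma expFTC {g : ℝ → ℂ} (hg : IntervalIntegrable g volume 0 1) (c lam : ℂ)
    {x : ℝ} (hx : x ∈ Icc (0:ℝ) 1) :
    Complex.exp (lam * x) * (c + ∫ t in (0:ℝ)..x, g t)
      = c + ∫ t in (0:ℝ)..x,
          (lam * Complex.exp (lam * t) * (c + ∫ s in (0:ℝ)..t, g s)
            + Complex.exp (lam * t) * g t) := by
  by_cases hlam : lam = 0
  · simp [hlam]
  have hsub : uIcc (0:ℝ) x ⊆ uIcc (0:ℝ) 1 := by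
    rw [uIcc_of_le hx.1, uIcc_of_le zero_le_one]
    exact Icc_subset_Icc le_rfl hx.2
  have hgx : IntervalIntegrable g volume 0 x := hg.mono_set hsub
  have hFc : ContinuousOn (fun t => c + ∫ s in (0:ℝ)..t, g s) (uIcc (0:ℝ) x) :=
    continuousOn_const.add (intervalIntegral.continuousOn_primitive_interval' hgx left_mem_uIcc)
  have hExp : Continuous fun t : ℝ => Complex.exp (lam * t) := cexp_cont' lam
  have hExpL : Continuous fun t : ℝ => lam * Complex.exp (lam * t) :=
    continuous_const.mul hExp
  have i1 : IntervalIntegrable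
      (fun t => lam * Complex.exp (lam * t) * (c + ∫ s in (0:ℝ)..t, g s)) volume 0 x :=
    (hExpL.continuousOn.mul hFc).intervalIntegrable
  have i2 : IntervalIntegrable (fun t => Complex.exp (lam * t) * g t) volume 0 x :=
    hgx.continuousOn_mul hExp.continuousOn
  have i1a : IntervalIntegrable (fun t => lam * Complex.exp (lam * t) * c) volume 0 x :=
    (hExpL.mul continuous_const).intervalIntegrable 0 x
  have i1b : IntervalIntegrable
      (fun t => lam * Complex.exp (lam * t) * ∫ s in (0:ℝ)..t, g s) volume 0 x :=
    (hExpL.continuousOn.mul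
      (intervalIntegral.continuousOn_primitive_interval' hgx left_mem_uIcc)).intervalIntegrable
  have igc : IntervalIntegrable (fun s => g s * Complex.exp (lam * s)) volume 0 x :=
    hgx.mul_continuousOn hExp.continuousOn
  have igE : IntervalIntegrable (fun s => g s * Complex.exp (lam * x)) volume 0 x :=
    hgx.mul_const _
  -- value of ∫ lam * exp(lam t)
  have hexpint : ∀ y z : ℝ, (∫ t in y..z, lam * Complex.exp (lam * t))
      = Complex.exp (lam * z) - Complex.exp (lam * y) := by
    intro y z
    rw [intervalIntegral.integral_const_mul, integral_exp_mul_complex hlam]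
    field_simp
  -- E a : ∫ lam exp c
  have Ea : (∫ t in (0:ℝ)..x, lam * Complex.exp (lam * t) * c)
      = (Complex.exp (lam * x) - 1) * c := by
    rw [intervalIntegral.integral_mul_const, hexpint]
    norm_num
  -- E b : triangle swap
  have Eb : (∫ t in (0:ℝ)..x, lam * Complex.exp (lam * t) * ∫ s in (0:ℝ)..t, g s)
      = ∫ s in (0:ℝ)..x, g s * (Complex.exp (lam * x) - Complex.exp (lam * s)) := by
    have h1 : (fun t : ℝ => lam * Complex.exp (lam * t) * ∫ s in (0:ℝ)..t, g s)
        = fun t : ℝ => (∫ s in (0:ℝ)..t, g s) * (lam * Complex.exp (lam * t)) := by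
      ext t; ring
    rw [h1]
    have h2 := tri_swap (f := g) (g := fun τ => lam * Complex.exp (lam * τ)) hx.1
      ((intervalIntegrable_iff_integrableOn_Ioc_of_le hx.1).mp hgx)
      (hExpL.integrableOn_Ioc)
    rw [← h2]
    apply intervalIntegral.integral_congr
    intro s _
    show g s * (∫ τ in s..x, lam * Complex.exp (lam * τ)) = _
    rw [hexpint]
  have Ec : (∫ s in (0:ℝ)..x, g s * (Complex.exp (lam * x) - Complex.exp (lam * s)))
      = (∫ s in (0:ℝ)..x, g s) * Complex.exp (lam * x)
        - ∫ s in (0:ℝ)..x, g s * Complex.exp (lam * s) := by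
    have h1 : (fun s => g s * (Complex.exp (lam * x) - Complex.exp (lam * s)))
        = fun s => g s * Complex.exp (lam * x) - g s * Complex.exp (lam * s) := by
      ext s; ring
    rw [h1, intervalIntegral.integral_sub igE igc, intervalIntegral.integral_mul_const]
  have hcomm : (∫ s in (0:ℝ)..x, Complex.exp (lam * s) * g s)
      = ∫ s in (0:ℝ)..x, g s * Complex.exp (lam * s) := by
    apply intervalIntegral.integral_congr; intro s _; ring
  rw [intervalIntegral.integral_add i1 i2]
  have hsplit : (∫ t in (0:ℝ)..x, lam * Complex.exp (lam * t) * (c + ∫ s in (0:ℝ)..t, g s))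
      = (∫ t in (0:ℝ)..x, lam * Complex.exp (lam * t) * c)
        + ∫ t in (0:ℝ)..x, lam * Complex.exp (lam * t) * ∫ s in (0:ℝ)..t, g s := by
    rw [← intervalIntegral.integral_add i1a i1b]
    apply intervalIntegral.integral_congr; intro t _; ring
  rw [hsplit, Ea, Eb, Ec, hcomm]
  ring

/-- Main integral-equation derivation -/
lemma z_eq (σ₁ σ₂ : ℝ → ℂ) (μ : ℂ) (g₁ g₂ : ℝ → ℂ)
    (hσ₁i : IntegrableOn σ₁ (Icc (0:ℝ) 1) volume)
    (hσ₂i : IntegrableOn σ₂ (Icc (0:ℝ) 1) volume)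
    (hg₁ : IntervalIntegrable g₁ volume 0 1) (hg₂ : IntervalIntegrable g₂ volume 0 1)
    (c₂ : ℂ)
    (hode1 : ∀ᵐ x ∂(volume.restrict (Icc (0:ℝ) 1)),
      g₁ x + σ₁ x * (c₂ + ∫ t in (0:ℝ)..x, g₂ t)
        = Complex.I * μ * (∫ t in (0:ℝ)..x, g₁ t))
    (hode2 : ∀ᵐ x ∂(volume.restrict (Icc (0:ℝ) 1)),
      g₂ x + σ₂ x * (∫ t in (0:ℝ)..x, g₁ t)
        = -(Complex.I * μ) * (c₂ + ∫ t in (0:ℝ)..x, g₂ t))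
    (hV21 : c₂ + (∫ t in (0:ℝ)..1, g₂ t) = 1) :
    ∀ x ∈ Icc (0:ℝ) 1,
      Complex.exp (Complex.I*μ*(x-1)) * (c₂ + ∫ t in (0:ℝ)..x, g₂ t)
        = 1 - ∫ t in x..(1:ℝ), σ₂ t * ∫ s in (0:ℝ)..t,
            Complex.exp (2*Complex.I*μ*(t-s)) * σ₁ s *
              (Complex.exp (Complex.I*μ*(s-1)) * (c₂ + ∫ τ in (0:ℝ)..s, g₂ τ)) := by
  set V₂ : ℝ → ℂ := fun s => c₂ + ∫ τ in (0:ℝ)..s, g₂ τ with hV₂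
  set V₁ : ℝ → ℂ := fun s => ∫ τ in (0:ℝ)..s, g₁ τ with hV₁
  have hI : uIcc (0:ℝ) 1 = Icc (0:ℝ) 1 := uIcc_of_le zero_le_one
  have hV₂c : ContinuousOn V₂ (Icc (0:ℝ) 1) := by
    rw [← hI]
    exact continuousOn_const.add
      (intervalIntegral.continuousOn_primitive_interval' hg₂ left_mem_uIcc)
  have hV₁c : ContinuousOn V₁ (Icc (0:ℝ) 1) := by
    rw [← hI]
    exact intervalIntegral.continuousOn_primitive_interval' hg₁ left_mem_uIcc
  have hσ₁I : IntervalIntegrable σ₁ volume 0 1 := by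
    rw [intervalIntegrable_iff, uIoc_of_le zero_le_one]
    exact hσ₁i.mono_set Ioc_subset_Icc_self
  have hσ₂I : IntervalIntegrable σ₂ volume 0 1 := by
    rw [intervalIntegrable_iff, uIoc_of_le zero_le_one]
    exact hσ₂i.mono_set Ioc_subset_Icc_self
  -- STEP 1 : V₁ t = exp(iμt) * W1 t  on Icc
  set W1 : ℝ → ℂ :=
    fun t => ∫ s in (0:ℝ)..t, -(Complex.exp (-(Complex.I*μ)*s) * σ₁ s * V₂ s) with hW1
  have hW1int : IntervalIntegrable
      (fun s => -(Complex.exp (-(Complex.I*μ)*s) * σ₁ s * V₂ s)) volume 0 1 := by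
    have : (fun s : ℝ => -(Complex.exp (-(Complex.I*μ)*s) * σ₁ s * V₂ s))
        = fun s : ℝ => σ₁ s * (-(Complex.exp (-(Complex.I*μ)*s) * V₂ s)) := by
      ext s; ring
    rw [this]
    refine hσ₁I.mul_continuousOn ?_
    rw [hI]
    exact ((cexp_cont' _).continuousOn.mul hV₂c).neg
  have step1 : ∀ t ∈ Icc (0:ℝ) 1, V₁ t = Complex.exp (Complex.I*μ*t) * W1 t := by
    intro t ht
    have h0 := expFTC hg₁ 0 (-(Complex.I*μ)) ht
    have hcg : (∫ s in (0:ℝ)..t,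
        (-(Complex.I*μ) * Complex.exp (-(Complex.I*μ)*s) * (0 + ∫ τ in (0:ℝ)..s, g₁ τ)
          + Complex.exp (-(Complex.I*μ)*s) * g₁ s))
        = W1 t := by
      rw [hW1]
      apply intervalIntegral.integral_congr_ae
      have h1 := (ae_restrict_iff' measurableSet_Icc).mp hode1
      filter_upwards [h1] with s hs hsmem
      have hs' := hs (uIoc_sub (left_mem_Icc.mpr zero_le_one) ht hsmem)
      rw [zero_add]
      linear_combination Complex.exp (-(Complex.I*μ)*s) * hs'
    rw [hcg, zero_add] at h0
    -- h0 : exp(-(iμ)t) * V₁ t = 0 + W1 t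
    have h2 : Complex.exp (Complex.I*μ*t) * (Complex.exp (-(Complex.I*μ)*t) * V₁ t)
        = Complex.exp (Complex.I*μ*t) * (0 + W1 t) := by rw [h0]
    rw [← mul_assoc, ← Complex.exp_add] at h2
    simp only [zero_add] at h2
    have h3 : Complex.I*μ*t + -(Complex.I*μ)*t = 0 := by ring
    rw [h3, Complex.exp_zero, one_mul] at h2
    exact h2
  -- STEP 2 : exp(iμx) V₂ x = c₂ + ∫₀ˣ h̃
  set ht2 : ℝ → ℂ := fun t => -(Complex.exp (Complex.I*μ*t) * σ₂ t * V₁ t) with hht2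
  have hht2int : IntervalIntegrable ht2 volume 0 1 := by
    have : ht2 = fun s => σ₂ s * (-(Complex.exp (Complex.I*μ*s) * V₁ s)) := by
      ext s; rw [hht2]; ring
    rw [this]
    refine hσ₂I.mul_continuousOn ?_
    rw [hI]
    exact ((cexp_cont' _).continuousOn.mul hV₁c).neg
  have step2 : ∀ y ∈ Icc (0:ℝ) 1,
      Complex.exp (Complex.I*μ*y) * V₂ y = c₂ + ∫ t in (0:ℝ)..y, ht2 t := by
    intro y hy
    have h0 := expFTC hg₂ c₂ (Complex.I*μ) hy
    have hcg : (∫ s in (0:ℝ)..y,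
        ((Complex.I*μ) * Complex.exp ((Complex.I*μ)*s) * (c₂ + ∫ τ in (0:ℝ)..s, g₂ τ)
          + Complex.exp ((Complex.I*μ)*s) * g₂ s))
        = ∫ t in (0:ℝ)..y, ht2 t := by
      apply intervalIntegral.integral_congr_ae
      have h1 := (ae_restrict_iff' measurableSet_Icc).mp hode2
      filter_upwards [h1] with s hs hsmem
      have hs' := hs (uIoc_sub (left_mem_Icc.mpr zero_le_one) hy hsmem)
      rw [hht2]
      linear_combination Complex.exp (Complex.I*μ*s) * hs'
    rw [hcg] at h0
    exact h0
  intro x hx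
  show Complex.exp (Complex.I*μ*(x-1)) * V₂ x
      = 1 - ∫ t in x..(1:ℝ), σ₂ t * ∫ s in (0:ℝ)..t,
          Complex.exp (2*Complex.I*μ*(t-s)) * σ₁ s *
            (Complex.exp (Complex.I*μ*(s-1)) * V₂ s)
  -- STEP 3 : combine
  have e1 := step2 1 (right_mem_Icc.mpr zero_le_one)
  rw [show V₂ 1 = 1 from hV21, mul_one] at e1
  have ex := step2 x hx
  have hadj : (∫ t in (0:ℝ)..x, ht2 t) + (∫ t in x..(1:ℝ), ht2 t)
      = ∫ t in (0:ℝ)..1, ht2 t := by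
    apply intervalIntegral.integral_add_adjacent_intervals
    · exact hht2int.mono_set (by rw [hI]; exact uIcc_sub (left_mem_Icc.mpr zero_le_one) hx)
    · exact hht2int.mono_set (by rw [hI]; exact uIcc_sub hx (right_mem_Icc.mpr zero_le_one))
  -- exp(iμx) V₂ x = exp(iμ) - ∫ₓ¹ ht2
  have key1 : Complex.exp (Complex.I*μ*x) * V₂ x
      = Complex.exp (Complex.I*μ*((1:ℝ):ℂ)) - ∫ t in x..(1:ℝ), ht2 t := by
    rw [ex, e1, ← hadj]; ring
  -- rewrite ∫ₓ¹ ht2 using step1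
  have key2 : (∫ t in x..(1:ℝ), ht2 t)
      = ∫ t in x..(1:ℝ), Complex.exp (Complex.I*μ) *
          (σ₂ t * ∫ s in (0:ℝ)..t,
            Complex.exp (2*Complex.I*μ*(t-s)) * σ₁ s *
              (Complex.exp (Complex.I*μ*(s-1)) * V₂ s)) := by
    apply intervalIntegral.integral_congr
    intro t htm
    have htI : t ∈ Icc (0:ℝ) 1 := uIcc_sub hx (right_mem_Icc.mpr zero_le_one) htm
    have hs1 := step1 t htI
    rw [hht2]
    show -(Complex.exp (Complex.I*μ*t) * σ₂ t * V₁ t) = _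
    rw [hs1]
    -- inner rearrangement
    have inner_eq : Complex.exp (2*Complex.I*μ*t) * W1 t
        = -(Complex.exp (Complex.I*μ) * ∫ s in (0:ℝ)..t,
            Complex.exp (2*Complex.I*μ*(t-s)) * σ₁ s *
              (Complex.exp (Complex.I*μ*(s-1)) * V₂ s)) := by
      rw [hW1, ← intervalIntegral.integral_const_mul, ← intervalIntegral.integral_const_mul,
        ← intervalIntegral.integral_neg]
      apply intervalIntegral.integral_congr
      intro s _
      show Complex.exp (2*Complex.I*μ*t) * -(Complex.exp (-(Complex.I*μ)*s) * σ₁ s * V₂ s)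
          = -(Complex.exp (Complex.I*μ) * (Complex.exp (2*Complex.I*μ*(t-s)) * σ₁ s *
              (Complex.exp (Complex.I*μ*(s-1)) * V₂ s)))
      have hexp : Complex.exp (2*Complex.I*μ*t) * Complex.exp (-(Complex.I*μ)*s)
          = Complex.exp (Complex.I*μ) * (Complex.exp (2*Complex.I*μ*(t-s))
              * Complex.exp (Complex.I*μ*(s-1))) := by
        rw [← Complex.exp_add, ← Complex.exp_add, ← Complex.exp_add]
        congr 1; push_cast; ring
      calc Complex.exp (2*Complex.I*μ*t) * -(Complex.exp (-(Complex.I*μ)*s) * σ₁ s * V₂ s)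
          = -(Complex.exp (2*Complex.I*μ*t) * Complex.exp (-(Complex.I*μ)*s) * σ₁ s * V₂ s) := by
            ring
        _ = _ := by rw [hexp]; ring
    have hsplit : Complex.exp (Complex.I*μ*t) * Complex.exp (Complex.I*μ*t)
        = Complex.exp (2*Complex.I*μ*t) := by
      rw [← Complex.exp_add]; congr 1; ring
    calc -(Complex.exp (Complex.I*μ*t) * σ₂ t * (Complex.exp (Complex.I*μ*t) * W1 t))
        = -(σ₂ t * (Complex.exp (Complex.I*μ*t) * Complex.exp (Complex.I*μ*t) * W1 t)) := by ring
      _ = -(σ₂ t * (Complex.exp (2*Complex.I*μ*t) * W1 t)) := by rw [hsplit]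
      _ = _ := by rw [inner_eq]; ring
  rw [key2, intervalIntegral.integral_const_mul] at key1
  -- multiply key1 by exp(iμ(x-1)) * exp(-iμx) = exp(-iμ)
  have hm : Complex.exp (Complex.I*μ*(x-1)) * V₂ x
      = Complex.exp (-(Complex.I*μ)) * (Complex.exp (Complex.I*μ*x) * V₂ x) := by
    rw [← mul_assoc, ← Complex.exp_add]; congr 2; push_cast; ring
  rw [hm, key1, mul_sub, ← Complex.exp_add, ← mul_assoc, ← Complex.exp_add]
  norm_num

lemma normExpBound {r : ℝ} {μ : ℂ} (hr : 0 ≤ r) (him : -r < μ.im) {s t : ℝ}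
    (h0 : 0 ≤ s) (hst : s ≤ t) (ht : t ≤ 1) :
    ‖Complex.exp (2*Complex.I*μ*((t:ℂ)-(s:ℂ)))‖ ≤ Real.exp (2*r) := by
  rw [Complex.norm_exp, Real.exp_le_exp]
  have h1 : ((t:ℂ) - (s:ℂ)) = ((t - s : ℝ) : ℂ) := by push_cast; ring
  rw [h1]
  have hre : (2*Complex.I*μ*((t - s : ℝ):ℂ)).re = (2*Complex.I*μ).re * (t-s) := by
    rw [Complex.mul_re]
    simp
  rw [hre]
  have h2 : (2*Complex.I*μ).re = -2*μ.im := by simp [Complex.mul_re, Complex.mul_im]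
  rw [h2]
  have h3 : -μ.im ≤ r := by linarith
  have h4 : 0 ≤ t - s := by linarith
  have h5 : t - s ≤ 1 := by linarith
  have h6 : (-μ.im) * (t-s) ≤ r * (t-s) := mul_le_mul_of_nonneg_right h3 h4
  have h7 : r * (t-s) ≤ r * 1 := mul_le_mul_of_nonneg_left h5 hr
  nlinarith

lemma norm_ii_le {f : ℝ → ℂ} {bnd : ℝ → ℝ} {x y : ℝ} (hx : x ∈ Icc (0:ℝ) 1)
    (hy : y ∈ Icc (0:ℝ) 1) (hxy : x ≤ y)
    (hfi : IntervalIntegrable f volume x y) (hbi : IntervalIntegrable bnd volume 0 1)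
    (hb : ∀ s ∈ Icc x y, ‖f s‖ ≤ bnd s) (hb0 : ∀ s ∈ Icc (0:ℝ) 1, 0 ≤ bnd s) :
    ‖∫ s in x..y, f s‖ ≤ ∫ s in (0:ℝ)..1, bnd s := by
  have h0 : ∀ s ∈ Icc (0:ℝ) 1, 0 ≤ bnd s := hb0
  have hbix : IntervalIntegrable bnd volume x y := by
    apply hbi.mono_set
    rw [uIcc_of_le hxy, uIcc_of_le zero_le_one]
    exact Icc_subset_Icc hx.1 hy.2
  calc ‖∫ s in x..y, f s‖ ≤ ∫ s in x..y, ‖f s‖ :=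
        intervalIntegral.norm_integral_le_integral_norm hxy
    _ ≤ ∫ s in x..y, bnd s := by
        apply intervalIntegral.integral_mono_on hxy hfi.norm hbix
        exact fun s hs => hb s hs
    _ ≤ ∫ s in (0:ℝ)..1, bnd s := by
        apply intervalIntegral.integral_mono_interval hx.1 hxy hy.2 _ hbi
        rw [Filter.EventuallyLE, ae_restrict_iff' measurableSet_Ioc]
        exact ae_of_all _ fun s hs => h0 s ⟨hs.1.le, hs.2⟩

lemma pull_exp (φ : ℝ → ℂ) (μ : ℂ) (a t : ℝ) :
    (∫ s in a..t, Complex.exp (2*Complex.I*μ*((t:ℝ)-(s:ℝ))) * φ s)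
    = Complex.exp (2*Complex.I*μ*(t:ℝ)) * ∫ s in a..t, Complex.exp (-(2*Complex.I*μ)*(s:ℝ)) * φ s := by
  rw [← intervalIntegral.integral_const_mul]
  apply intervalIntegral.integral_congr
  intro s _
  show Complex.exp (2*Complex.I*μ*((t:ℝ)-(s:ℝ))) * φ s
      = Complex.exp (2*Complex.I*μ*(t:ℝ)) * (Complex.exp (-(2*Complex.I*μ)*(s:ℝ)) * φ s)
  rw [← mul_assoc, ← Complex.exp_add]
  have h : (2*Complex.I*μ*((t:ℝ)-(s:ℝ)) : ℂ) = 2*Complex.I*μ*(t:ℝ) + -(2*Complex.I*μ)*(s:ℝ) := by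
    push_cast; ring
  rw [h]

lemma pull_exp_shift (φ : ℝ → ℂ) (μ : ℂ) (t τ : ℝ) :
    (∫ s in (0:ℝ)..τ, Complex.exp (2*Complex.I*μ*((t:ℝ)-(s:ℝ))) * φ s)
    = Complex.exp (2*Complex.I*μ*((t:ℝ)-(τ:ℝ))) *
        ∫ s in (0:ℝ)..τ, Complex.exp (2*Complex.I*μ*((τ:ℝ)-(s:ℝ))) * φ s := by
  rw [← intervalIntegral.integral_const_mul]
  apply intervalIntegral.integral_congr
  intro s _
  show Complex.exp (2*Complex.I*μ*((t:ℝ)-(s:ℝ))) * φ s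
      = Complex.exp (2*Complex.I*μ*((t:ℝ)-(τ:ℝ))) * (Complex.exp (2*Complex.I*μ*((τ:ℝ)-(s:ℝ))) * φ s)
  rw [← mul_assoc, ← Complex.exp_add]
  have h : (2*Complex.I*μ*((t:ℝ)-(s:ℝ)) : ℂ)
      = 2*Complex.I*μ*((t:ℝ)-(τ:ℝ)) + 2*Complex.I*μ*((τ:ℝ)-(s:ℝ)) := by
    push_cast; ring
  rw [h]

lemma holder_ile (p q : ℝ≥0∞) (hpq : 1/p + 1/q = 1) (f : ℝ → ℂ) (w : ℝ → ℝ)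
    (hf : AEStronglyMeasurable f (volume.restrict (Icc (0:ℝ) 1)))
    (hw : AEStronglyMeasurable w (volume.restrict (Icc (0:ℝ) 1)))
    (hw0 : ∀ x, 0 ≤ w x)
    (hfp : eLpNorm f p (volume.restrict (Icc (0:ℝ) 1)) ≠ ⊤)
    (hwq : eLpNorm w q (volume.restrict (Icc (0:ℝ) 1)) ≠ ⊤)
    (hb : Integrable (fun x => ‖f x‖ * w x) (volume.restrict (Icc (0:ℝ) 1))) :
    ∫ x in Icc (0:ℝ) 1, ‖f x‖ * w x
      ≤ (eLpNorm f p (volume.restrict (Icc (0:ℝ) 1))).toReal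
        * (eLpNorm w q (volume.restrict (Icc (0:ℝ) 1))).toReal := by
  set ν := volume.restrict (Icc (0:ℝ) 1)
  have key : eLpNorm (fun x => ‖f x‖ * w x) 1 ν ≤ eLpNorm f p ν * eLpNorm w q ν := by
    haveI : ENNReal.HolderTriple p q 1 := ⟨by rw [one_div, one_div] at hpq; rw [hpq, inv_one]⟩
    have := eLpNorm_le_eLpNorm_mul_eLpNorm'_of_norm (p := p) (q := q) (r := 1) hf hw
      (fun (a : ℂ) (c : ℝ) => ‖a‖ * c) 1
      (ae_of_all _ fun x => by rw [norm_mul, norm_norm]; simp)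
    simpa using this
  have h1 : (∫ x, ‖f x‖ * w x ∂ν) = ∫ x, ‖(fun y => ‖f y‖ * w y) x‖ ∂ν := by
    apply integral_congr_ae
    exact ae_of_all _ fun x =>
      (Real.norm_of_nonneg (mul_nonneg (norm_nonneg _) (hw0 x))).symm
  rw [h1, integral_norm_eq_lintegral_enorm hb.1, ← eLpNorm_one_eq_lintegral_enorm,
    ← ENNReal.toReal_mul]
  exact ENNReal.toReal_mono (ENNReal.mul_ne_top hfp hwq) key

lemma cs_bound {w g : ℝ → ℝ} (hw : AEStronglyMeasurable w (volume.restrict (Icc (0:ℝ) 1)))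
    (hwnn : ∀ x, 0 ≤ w x)
    (hg : AEStronglyMeasurable g (volume.restrict (Icc (0:ℝ) 1))) (hgnn : ∀ x, 0 ≤ g x)
    (hwi : Integrable w (volume.restrict (Icc (0:ℝ) 1)))
    {c : ℝ} (hbd : ∀ᵐ x ∂(volume.restrict (Icc (0:ℝ) 1)), ‖g x‖ ≤ c) :
    (∫ x in Icc (0:ℝ) 1, w x * g x)^2
      ≤ (∫ x in Icc (0:ℝ) 1, w x) * ∫ x in Icc (0:ℝ) 1, w x * g x^2 := by
  set ν := volume.restrict (Icc (0:ℝ) 1)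
  set f1 : ℝ → ℝ := fun x => Real.sqrt (w x) with hf1
  set f2 : ℝ → ℝ := fun x => Real.sqrt (w x) * g x with hf2
  have hf1m : AEStronglyMeasurable f1 ν := Real.continuous_sqrt.comp_aestronglyMeasurable hw
  have hf2m : AEStronglyMeasurable f2 ν := hf1m.mul hg
  have hrpow : ∀ y : ℝ, y ^ (2:ℝ) = y ^ 2 := fun y => by
    rw [show ((2:ℝ)) = ((2:ℕ):ℝ) by norm_num, Real.rpow_natCast]
  have hsq1 : ∀ x, f1 x ^ (2:ℝ) = w x := fun x => by
    rw [hrpow, Real.sq_sqrt (hwnn x)]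
  have hsq2' : ∀ x, f2 x ^ (2:ℕ) = w x * g x ^ 2 := fun x => by
    show (Real.sqrt (w x) * g x)^2 = _
    rw [mul_pow, Real.sq_sqrt (hwnn x)]
  have hsq2 : ∀ x, f2 x ^ (2:ℝ) = w x * g x ^ 2 := fun x => by
    rw [hrpow]; exact hsq2' x
  have hm1 : MemLp f1 (ENNReal.ofReal 2) ν := by
    rw [show ENNReal.ofReal 2 = 2 by norm_num]
    rw [memLp_two_iff_integrable_sq hf1m]
    apply hwi.congr
    exact ae_of_all _ fun x => (Real.sq_sqrt (hwnn x)).symm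
  have hgsqi : Integrable (fun x => w x * g x ^ 2) ν := by
    have := Integrable.bdd_mul (f := fun x => g x ^ 2) (g := w) (c := c^2) hwi
      ((hg.aemeasurable.mul hg.aemeasurable).aestronglyMeasurable.congr
        (ae_of_all _ fun x => (pow_two (g x)).symm))
      (by filter_upwards [hbd] with x hx
          rw [Real.norm_of_nonneg (sq_nonneg _)]
          calc g x ^ 2 = ‖g x‖^2 := by rw [Real.norm_of_nonneg (hgnn x)]
            _ ≤ c^2 := by
                apply pow_le_pow_left₀ (norm_nonneg _) hx)
    apply this.congr
    exact ae_of_all _ fun x => by ring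
  have hm2 : MemLp f2 (ENNReal.ofReal 2) ν := by
    rw [show ENNReal.ofReal 2 = 2 by norm_num]
    rw [memLp_two_iff_integrable_sq hf2m]
    apply hgsqi.congr
    exact ae_of_all _ fun x => (hsq2' x).symm
  have hconj : Real.HolderConjugate 2 2 := ⟨by norm_num, by norm_num, by norm_num⟩
  have key := integral_mul_le_Lp_mul_Lq_of_nonneg hconj
    (μ := ν) (f := f1) (g := f2)
    (ae_of_all _ fun x => Real.sqrt_nonneg _)
    (ae_of_all _ fun x => mul_nonneg (Real.sqrt_nonneg _) (hgnn x)) hm1 hm2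
  have e1 : (∫ x, f1 x * f2 x ∂ν) = ∫ x in Icc (0:ℝ) 1, w x * g x := by
    apply integral_congr_ae; apply ae_of_all; intro x
    show Real.sqrt (w x) * (Real.sqrt (w x) * g x) = _
    rw [← mul_assoc, Real.mul_self_sqrt (hwnn x)]
  have e2 : (∫ x, f1 x ^ (2:ℝ) ∂ν) = ∫ x in Icc (0:ℝ) 1, w x := by
    apply integral_congr_ae; exact ae_of_all _ fun x => hsq1 x
  have e3 : (∫ x, f2 x ^ (2:ℝ) ∂ν) = ∫ x in Icc (0:ℝ) 1, w x * g x ^ 2 := by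
    apply integral_congr_ae; exact ae_of_all _ fun x => hsq2 x
  rw [e1, e2, e3] at key
  have hL0 : 0 ≤ ∫ x in Icc (0:ℝ) 1, w x * g x :=
    integral_nonneg fun x => mul_nonneg (hwnn x) (hgnn x)
  have ha0 : 0 ≤ ∫ x in Icc (0:ℝ) 1, w x := integral_nonneg fun x => hwnn x
  have hb0 : 0 ≤ ∫ x in Icc (0:ℝ) 1, w x * g x ^ 2 :=
    integral_nonneg fun x => mul_nonneg (hwnn x) (sq_nonneg _)
  calc (∫ x in Icc (0:ℝ) 1, w x * g x)^2
      ≤ ((∫ x in Icc (0:ℝ) 1, w x) ^ (1/(2:ℝ))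
          * (∫ x in Icc (0:ℝ) 1, w x * g x ^ 2) ^ (1/(2:ℝ)))^2 :=
        pow_le_pow_left₀ hL0 key 2
    _ = _ := by
        rw [← Real.sqrt_eq_rpow, ← Real.sqrt_eq_rpow, mul_pow,
          Real.sq_sqrt ha0, Real.sq_sqrt hb0]


/-- auxiliary quantities -/
def S1c (σ : ℝ → ℂ) : ℝ := ∫ t in (0:ℝ)..1, ‖σ t‖
def Ac (σ₁ σ₂ : ℝ → ℂ) (μ : ℂ) : ℝ := ∫ t in (0:ℝ)..1, ‖σ₂ t‖ * gamma01 σ₁ μ t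
def Gc (σ₁ σ₂ : ℝ → ℂ) (μ : ℂ) : ℝ := ∫ t in (0:ℝ)..1, ‖σ₂ t‖ * gamma01 σ₁ μ t ^ 2
def Kc (σ₁ σ₂ : ℝ → ℂ) (μ : ℂ) : ℂ :=
  ∫ t in (0:ℝ)..1, σ₂ t * ∫ s in (0:ℝ)..t, Complex.exp (2 * Complex.I * μ * (t - s)) * σ₁ s
def Qc (σ₁ σ₂ : ℝ → ℂ) (r : ℝ) : ℝ :=
  1 + S1c σ₂ * Real.exp (2*r) * Real.exp (2*r) * S1c σ₁

lemma cexp_cont2 (lam : ℂ) (t : ℝ) :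
    Continuous fun s : ℝ => Complex.exp (lam * ((t:ℂ) - (s:ℂ))) :=
  Complex.continuous_exp.comp
    (continuous_const.mul (continuous_const.sub Complex.continuous_ofReal))

lemma mul_ii {A : Type*} [NormedRing A] {f w : ℝ → A} (hf : IntervalIntegrable f volume 0 1)
    (hw : ContinuousOn w (Icc (0:ℝ) 1)) {x y : ℝ} (hx : x ∈ Icc (0:ℝ) 1)
    (hy : y ∈ Icc (0:ℝ) 1) :
    IntervalIntegrable (fun t => f t * w t) volume x y := by
  apply IntervalIntegrable.mul_continuousOn
  · apply hf.mono_set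
    rw [uIcc_of_le (zero_le_one : (0:ℝ) ≤ 1)]
    exact uIcc_sub hx hy
  · exact hw.mono (uIcc_sub hx hy)

set_option maxHeartbeats 1000000 in
lemma ESTmain (σ₁ σ₂ : ℝ → ℂ)
    (hσ₁i : IntegrableOn σ₁ (Icc (0:ℝ) 1) volume)
    (hσ₂i : IntegrableOn σ₂ (Icc (0:ℝ) 1) volume)
    (r : ℝ) (hr : 0 ≤ r) (μ : ℂ) (him : -r < μ.im)
    (z : ℝ → ℂ) (hzc : ContinuousOn z (Icc (0:ℝ) 1))
    (hzint : ∀ x ∈ Icc (0:ℝ) 1,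
      z x = 1 - ∫ t in x..(1:ℝ), σ₂ t * ∫ s in (0:ℝ)..t,
        Complex.exp (2*Complex.I*μ*((t:ℝ)-(s:ℝ))) * σ₁ s * z s)
    (hsmall : Qc σ₁ σ₂ r * Ac σ₁ σ₂ μ ≤ 1/4) :
    (1/2 ≤ ‖z 0‖) ∧ ‖1/(z 0) - 1 - Kc σ₁ σ₂ μ‖
      ≤ 2*((Qc σ₁ σ₂ r + 1) * (2*(Qc σ₁ σ₂ r * Ac σ₁ σ₂ μ)) * Ac σ₁ σ₂ μ
          + S1c σ₂ * (Real.exp (2*r) * Gc σ₁ σ₂ μ)) := by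
  set E := Real.exp (2*r) with hEdef
  set S₁ := S1c σ₁ with hS₁def
  set S₂ := S1c σ₂ with hS₂def
  set A := Ac σ₁ σ₂ μ with hAdef
  set Γ := Gc σ₁ σ₂ μ with hΓdef
  set Q := Qc σ₁ σ₂ r with hQdef
  have hI : uIcc (0:ℝ) 1 = Icc (0:ℝ) 1 := uIcc_of_le zero_le_one
  have mem0 : (0:ℝ) ∈ Icc (0:ℝ) 1 := left_mem_Icc.mpr zero_le_one
  have mem1 : (1:ℝ) ∈ Icc (0:ℝ) 1 := right_mem_Icc.mpr zero_le_one
  have hE1 : 1 ≤ E := Real.one_le_exp (by positivity)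
  have hE0 : 0 ≤ E := by linarith
  have hσ₁I : IntervalIntegrable σ₁ volume 0 1 := by
    rw [intervalIntegrable_iff, uIoc_of_le zero_le_one]
    exact hσ₁i.mono_set Ioc_subset_Icc_self
  have hσ₂I : IntervalIntegrable σ₂ volume 0 1 := by
    rw [intervalIntegrable_iff, uIoc_of_le zero_le_one]
    exact hσ₂i.mono_set Ioc_subset_Icc_self
  have hσ₁nI : IntervalIntegrable (fun s => ‖σ₁ s‖) volume 0 1 := hσ₁I.norm
  have hσ₂nI : IntervalIntegrable (fun s => ‖σ₂ s‖) volume 0 1 := hσ₂I.norm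
  have hS₁0 : 0 ≤ S₁ :=
    intervalIntegral.integral_nonneg zero_le_one (fun u _ => norm_nonneg _)
  have hS₂0 : 0 ≤ S₂ :=
    intervalIntegral.integral_nonneg zero_le_one (fun u _ => norm_nonneg _)
  have hQ1 : 1 ≤ Q := by
    rw [hQdef, Qc]
    have : 0 ≤ S1c σ₂ * Real.exp (2*r) * Real.exp (2*r) * S1c σ₁ := by positivity
    linarith
  -- basic objects
  set G : ℝ → ℂ := fun t => ∫ s in (0:ℝ)..t,
    Complex.exp (2*Complex.I*μ*((t:ℝ)-(s:ℝ))) * σ₁ s with hGdef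
  set γ : ℝ → ℝ := fun t => ‖G t‖ with hγdef
  set u : ℝ → ℂ := fun t => ∫ s in (0:ℝ)..t,
    Complex.exp (2*Complex.I*μ*((t:ℝ)-(s:ℝ))) * σ₁ s * z s with hudef
  set ρ : ℝ → ℂ := fun x => z x - 1 with hρdef
  set R : ℝ → ℂ := fun t => u t - G t with hRdef
  have hexpb : ∀ {s t : ℝ}, 0 ≤ s → s ≤ t → t ≤ 1 →
      ‖Complex.exp (2*Complex.I*μ*((t:ℝ)-(s:ℝ)))‖ ≤ E :=
    fun h1 h2 h3 => normExpBound hr him h1 h2 h3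
  -- continuity of G
  have hinnerGI : IntervalIntegrable
      (fun s => Complex.exp (-(2*Complex.I*μ)*(s:ℝ)) * σ₁ s) volume 0 1 :=
    hσ₁I.continuousOn_mul (cexp_cont' _).continuousOn
  have hGc : ContinuousOn G (Icc (0:ℝ) 1) := by
    have : G = fun t => Complex.exp (2*Complex.I*μ*(t:ℝ)) *
        ∫ s in (0:ℝ)..t, Complex.exp (-(2*Complex.I*μ)*(s:ℝ)) * σ₁ s :=
      funext fun t => pull_exp σ₁ μ 0 t
    rw [this]
    apply (cexp_cont' (2*Complex.I*μ)).continuousOn.mul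
    rw [← hI]
    exact intervalIntegral.continuousOn_primitive_interval' hinnerGI left_mem_uIcc
  have hγc : ContinuousOn γ (Icc (0:ℝ) 1) := hGc.norm
  -- continuity of u
  have hσzI : IntervalIntegrable (fun s => σ₁ s * z s) volume 0 1 :=
    mul_ii hσ₁I hzc mem0 mem1
  have huassoc : ∀ t, u t = ∫ s in (0:ℝ)..t,
      Complex.exp (2*Complex.I*μ*((t:ℝ)-(s:ℝ))) * (σ₁ s * z s) :=
    fun t => intervalIntegral.integral_congr fun s _ => mul_assoc _ _ _
  have hinneruI : IntervalIntegrable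
      (fun s => Complex.exp (-(2*Complex.I*μ)*(s:ℝ)) * (σ₁ s * z s)) volume 0 1 :=
    hσzI.continuousOn_mul (cexp_cont' _).continuousOn
  have huc : ContinuousOn u (Icc (0:ℝ) 1) := by
    have : u = fun t => Complex.exp (2*Complex.I*μ*(t:ℝ)) *
        ∫ s in (0:ℝ)..t, Complex.exp (-(2*Complex.I*μ)*(s:ℝ)) * (σ₁ s * z s) :=
      funext fun t => (huassoc t).trans (pull_exp (fun s => σ₁ s * z s) μ 0 t)
    rw [this]
    apply (cexp_cont' (2*Complex.I*μ)).continuousOn.mul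
    rw [← hI]
    exact intervalIntegral.continuousOn_primitive_interval' hinneruI left_mem_uIcc
  have hρc : ContinuousOn ρ (Icc (0:ℝ) 1) := hzc.sub continuousOn_const
  have hRc : ContinuousOn R (Icc (0:ℝ) 1) := huc.sub hGc
  -- the maximum of ‖ρ‖
  obtain ⟨x₀, hx₀I, hx₀max⟩ := isCompact_Icc.exists_isMaxOn
    (nonempty_Icc.mpr (zero_le_one : (0:ℝ) ≤ 1)) hρc.norm
  set M := ‖ρ x₀‖ with hMdef
  have hM0 : 0 ≤ M := norm_nonneg _
  have hmax : ∀ x ∈ Icc (0:ℝ) 1, ‖ρ x‖ ≤ M := fun x hx => hx₀max hx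
  -- interval-integrability of the exp-kernel times σ₁ on 0..t
  have hexpσ₁ : ∀ t ∈ Icc (0:ℝ) 1, IntervalIntegrable
      (fun s => Complex.exp (2*Complex.I*μ*((t:ℝ)-(s:ℝ))) * σ₁ s) volume 0 t :=
    fun t ht => (hσ₁I.mono_set (by rw [hI]; exact uIcc_sub mem0 ht)).continuousOn_mul
      (cexp_cont2 (2*Complex.I*μ) t).continuousOn
  -- gamma bound
  have hγbdd : ∀ t ∈ Icc (0:ℝ) 1, γ t ≤ E * S₁ := by
    intro t ht
    have h := norm_ii_le (f := fun s => Complex.exp (2*Complex.I*μ*((t:ℝ)-(s:ℝ))) * σ₁ s)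
      (bnd := fun s => E * ‖σ₁ s‖) mem0 ht ht.1 (hexpσ₁ t ht) (hσ₁nI.const_mul E)
      (fun s hs => by
        rw [norm_mul]
        exact mul_le_mul_of_nonneg_right (hexpb hs.1 hs.2 ht.2) (norm_nonneg _))
      (fun s _ => by positivity)
    calc γ t ≤ ∫ s in (0:ℝ)..1, E * ‖σ₁ s‖ := h
      _ = E * S₁ := by rw [intervalIntegral.integral_const_mul]; rfl
  have hγ0 : ∀ t, 0 ≤ γ t := fun t => norm_nonneg _
  -- R as integral of exp σ₁ ρ
  have hexpσ₁ρI : ∀ t ∈ Icc (0:ℝ) 1, IntervalIntegrable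
      (fun s => Complex.exp (2*Complex.I*μ*((t:ℝ)-(s:ℝ))) * σ₁ s * ρ s) volume 0 t := by
    intro t ht
    have h1 : (fun s => Complex.exp (2*Complex.I*μ*((t:ℝ)-(s:ℝ))) * σ₁ s * ρ s)
        = fun s => (σ₁ s * ρ s) * Complex.exp (2*Complex.I*μ*((t:ℝ)-(s:ℝ))) := by
      ext s; ring
    rw [h1]
    exact (mul_ii hσ₁I hρc mem0 ht).mul_continuousOn
      ((cexp_cont2 (2*Complex.I*μ) t).continuousOn)
  have hRid : ∀ t ∈ Icc (0:ℝ) 1, R t = ∫ s in (0:ℝ)..t,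
      Complex.exp (2*Complex.I*μ*((t:ℝ)-(s:ℝ))) * σ₁ s * ρ s := by
    intro t ht
    have hzi : IntervalIntegrable
        (fun s => Complex.exp (2*Complex.I*μ*((t:ℝ)-(s:ℝ))) * σ₁ s * z s) volume 0 t := by
      have h1 : (fun s => Complex.exp (2*Complex.I*μ*((t:ℝ)-(s:ℝ))) * σ₁ s * z s)
          = fun s => (σ₁ s * z s) * Complex.exp (2*Complex.I*μ*((t:ℝ)-(s:ℝ))) := by
        ext s; ring
      rw [h1]
      exact (mul_ii hσ₁I hzc mem0 ht).mul_continuousOn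
        ((cexp_cont2 (2*Complex.I*μ) t).continuousOn)
    show u t - G t = _
    rw [hudef, hGdef, ← intervalIntegral.integral_sub hzi (hexpσ₁ t ht)]
    apply intervalIntegral.integral_congr
    intro s _
    show Complex.exp (2*Complex.I*μ*((t:ℝ)-(s:ℝ))) * σ₁ s * z s
        - Complex.exp (2*Complex.I*μ*((t:ℝ)-(s:ℝ))) * σ₁ s = _
    rw [hρdef]; ring
  -- crude bound on R
  have hRcrude : ∀ t ∈ Icc (0:ℝ) 1, ‖R t‖ ≤ E * S₁ * M := by
    intro t ht
    rw [hRid t ht]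
    have h := norm_ii_le (bnd := fun s => E * M * ‖σ₁ s‖) mem0 ht ht.1
      (hexpσ₁ρI t ht) (hσ₁nI.const_mul (E*M))
      (fun s hs => by
        rw [norm_mul, norm_mul]
        calc ‖Complex.exp (2*Complex.I*μ*((t:ℝ)-(s:ℝ)))‖ * ‖σ₁ s‖ * ‖ρ s‖
            ≤ E * ‖σ₁ s‖ * M := by
              apply mul_le_mul
              · exact mul_le_mul_of_nonneg_right (hexpb hs.1 hs.2 ht.2) (norm_nonneg _)
              · exact hmax s ⟨hs.1, hs.2.trans ht.2⟩
              · exact norm_nonneg _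
              · positivity
          _ = E * M * ‖σ₁ s‖ := by ring)
      (fun s _ => by positivity)
    calc ‖∫ s in (0:ℝ)..t, Complex.exp (2*Complex.I*μ*((t:ℝ)-(s:ℝ))) * σ₁ s * ρ s‖
        ≤ ∫ s in (0:ℝ)..1, E * M * ‖σ₁ s‖ := h
      _ = E * S₁ * M := by
          rw [intervalIntegral.integral_const_mul]
          show E * M * S1c σ₁ = E * S₁ * M
          rw [hS₁def]; ring
  -- bound on u
  have hubdd : ∀ t ∈ Icc (0:ℝ) 1, ‖u t‖ ≤ γ t + E * S₁ * M := by
    intro t ht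
    have : u t = G t + R t := by rw [hRdef]; ring
    rw [this]
    calc ‖G t + R t‖ ≤ ‖G t‖ + ‖R t‖ := norm_add_le _ _
      _ ≤ γ t + E * S₁ * M := add_le_add le_rfl (hRcrude t ht)
  -- ρ as integral
  have hρid : ∀ x ∈ Icc (0:ℝ) 1, ρ x = -∫ t in x..(1:ℝ), σ₂ t * u t := by
    intro x hx
    show z x - 1 = _
    rw [hzint x hx]
    ring
  have hσ₂uI : ∀ {x y : ℝ}, x ∈ Icc (0:ℝ) 1 → y ∈ Icc (0:ℝ) 1 →
      IntervalIntegrable (fun t => σ₂ t * u t) volume x y :=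
    fun hx hy => mul_ii hσ₂I huc hx hy
  have hρsplit : ∀ s t : ℝ, s ∈ Icc (0:ℝ) 1 → t ∈ Icc (0:ℝ) 1 → s ≤ t →
      ρ s = ρ t - ∫ τ in s..t, σ₂ τ * u τ := by
    intro s t hs ht _
    have hadj : (∫ τ in s..t, σ₂ τ * u τ) + (∫ τ in t..(1:ℝ), σ₂ τ * u τ)
        = ∫ τ in s..(1:ℝ), σ₂ τ * u τ :=
      intervalIntegral.integral_add_adjacent_intervals (hσ₂uI hs ht) (hσ₂uI ht mem1)
    rw [hρid s hs, hρid t ht, ← hadj]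
    ring
  -- Fubini identity for R
  have hRfub : ∀ t ∈ Icc (0:ℝ) 1, R t = G t * ρ t
      - ∫ τ in (0:ℝ)..t, (Complex.exp (2*Complex.I*μ*((t:ℝ)-(τ:ℝ))) * G τ) * (σ₂ τ * u τ) := by
    intro t ht
    rw [hRid t ht]
    have hIcc0t : IntegrableOn (fun τ => σ₂ τ * u τ) (Icc 0 t) volume := by
      have := hσ₂uI mem0 ht
      rwa [intervalIntegrable_iff_integrableOn_Icc_of_le ht.1] at this
    have hprimc : ContinuousOn (fun s => ∫ τ in s..t, σ₂ τ * u τ) (uIcc (0:ℝ) t) := by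
      apply intervalIntegral.continuousOn_primitive_interval_left
      rwa [uIcc_of_le ht.1]
    have h1 : (∫ s in (0:ℝ)..t, Complex.exp (2*Complex.I*μ*((t:ℝ)-(s:ℝ))) * σ₁ s * ρ s)
        = ∫ s in (0:ℝ)..t,
            ((Complex.exp (2*Complex.I*μ*((t:ℝ)-(s:ℝ))) * σ₁ s) * ρ t
              - (Complex.exp (2*Complex.I*μ*((t:ℝ)-(s:ℝ))) * σ₁ s)
                  * ∫ τ in s..t, σ₂ τ * u τ) := by
      apply intervalIntegral.integral_congr
      intro s hs
      have hs' : s ∈ Icc (0:ℝ) 1 := uIcc_sub mem0 ht hs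
      have hst : s ≤ t := by
        rw [uIcc_of_le ht.1] at hs
        exact hs.2
      beta_reduce
      rw [hρsplit s t hs' ht hst]
      ring
    rw [h1]
    have hii1 : IntervalIntegrable
        (fun s => (Complex.exp (2*Complex.I*μ*((t:ℝ)-(s:ℝ))) * σ₁ s) * ρ t) volume 0 t :=
      (hexpσ₁ t ht).mul_const _
    have hii2 : IntervalIntegrable
        (fun s => (Complex.exp (2*Complex.I*μ*((t:ℝ)-(s:ℝ))) * σ₁ s)
          * ∫ τ in s..t, σ₂ τ * u τ) volume 0 t :=
      (hexpσ₁ t ht).mul_continuousOn hprimc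
    rw [intervalIntegral.integral_sub hii1 hii2, intervalIntegral.integral_mul_const]
    congr 1
    have hswap := tri_swap (f := fun s => Complex.exp (2*Complex.I*μ*((t:ℝ)-(s:ℝ))) * σ₁ s)
      (g := fun τ => σ₂ τ * u τ) ht.1
      (by have := hexpσ₁ t ht
          rwa [intervalIntegrable_iff, uIoc_of_le ht.1] at this)
      (by have := hσ₂uI mem0 ht
          rwa [intervalIntegrable_iff, uIoc_of_le ht.1] at this)
    rw [hswap]
    apply intervalIntegral.integral_congr
    intro τ _
    show (∫ s in (0:ℝ)..τ, Complex.exp (2*Complex.I*μ*((t:ℝ)-(s:ℝ))) * σ₁ s) * (σ₂ τ * u τ)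
        = (Complex.exp (2*Complex.I*μ*((t:ℝ)-(τ:ℝ))) * G τ) * (σ₂ τ * u τ)
    rw [pull_exp_shift σ₁ μ t τ]
  -- refined bound on R
  have hRbound : ∀ t ∈ Icc (0:ℝ) 1, ‖R t‖ ≤ γ t * M + E * (Γ + E * S₁ * M * A) := by
    intro t ht
    rw [hRfub t ht]
    have hγint : ∀ t' ∈ Icc (0:ℝ) 1, True := fun _ _ => trivial
    have h2 : ‖∫ τ in (0:ℝ)..t,
        (Complex.exp (2*Complex.I*μ*((t:ℝ)-(τ:ℝ))) * G τ) * (σ₂ τ * u τ)‖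
        ≤ ∫ τ in (0:ℝ)..1, E * (‖σ₂ τ‖ * (γ τ * (γ τ + E * S₁ * M))) := by
      apply norm_ii_le mem0 ht ht.1
      · exact (hσ₂uI mem0 ht).continuousOn_mul
          (((cexp_cont2 (2*Complex.I*μ) t).continuousOn).mul
            (hGc.mono (uIcc_sub mem0 ht)))
      · exact ((mul_ii hσ₂nI (hγc.mul (hγc.add continuousOn_const)) mem0 mem1).const_mul E)
      · intro s hs
        have hs' : s ∈ Icc (0:ℝ) 1 := ⟨hs.1, hs.2.trans ht.2⟩
        rw [norm_mul, norm_mul]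
        calc ‖Complex.exp (2*Complex.I*μ*((t:ℝ)-(s:ℝ)))‖ * ‖G s‖ * ‖σ₂ s * u s‖
            ≤ (E * γ s) * (‖σ₂ s‖ * (γ s + E * S₁ * M)) := by
              apply mul_le_mul
              · exact mul_le_mul_of_nonneg_right (hexpb hs.1 hs.2 ht.2) (norm_nonneg _)
              · rw [norm_mul]
                exact mul_le_mul_of_nonneg_left (hubdd s hs') (norm_nonneg _)
              · exact norm_nonneg _
              · positivity
          _ = E * (‖σ₂ s‖ * (γ s * (γ s + E * S₁ * M))) := by ring
      · intro s _
        have := hγ0 s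
        positivity
    have h3 : (∫ τ in (0:ℝ)..1, E * (‖σ₂ τ‖ * (γ τ * (γ τ + E * S₁ * M))))
        = E * (Γ + E * S₁ * M * A) := by
      have hsplit : (fun τ => E * (‖σ₂ τ‖ * (γ τ * (γ τ + E * S₁ * M))))
          = fun τ => E * (‖σ₂ τ‖ * γ τ ^ 2) + (E * (E * S₁ * M)) * (‖σ₂ τ‖ * γ τ) := by
        ext τ; ring
      rw [hsplit, intervalIntegral.integral_add
        ((mul_ii hσ₂nI (hγc.mul hγc |>.congr (fun x _ => by rw [sq]; rfl)) mem0 mem1).const_mul E)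
        ((mul_ii hσ₂nI hγc mem0 mem1).const_mul _),
        intervalIntegral.integral_const_mul, intervalIntegral.integral_const_mul]
      have : Γ = ∫ τ in (0:ℝ)..1, ‖σ₂ τ‖ * γ τ ^ 2 := rfl
      rw [← this]
      have : A = ∫ τ in (0:ℝ)..1, ‖σ₂ τ‖ * γ τ := rfl
      rw [← this]
      ring
    calc ‖G t * ρ t - ∫ τ in (0:ℝ)..t,
          (Complex.exp (2*Complex.I*μ*((t:ℝ)-(τ:ℝ))) * G τ) * (σ₂ τ * u τ)‖
        ≤ ‖G t * ρ t‖ + ‖∫ τ in (0:ℝ)..t,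
            (Complex.exp (2*Complex.I*μ*((t:ℝ)-(τ:ℝ))) * G τ) * (σ₂ τ * u τ)‖ :=
          norm_sub_le _ _
      _ ≤ γ t * M + E * (Γ + E * S₁ * M * A) := by
          apply add_le_add
          · rw [norm_mul]
            exact mul_le_mul_of_nonneg_left (hmax t ht) (hγ0 t)
          · rw [← h3]; exact h2
  -- main inequality for M
  have hMineq : M ≤ A + S₂ * E * Γ + Q * A * M := by
    have h1 : ‖ρ x₀‖ ≤ ∫ t in (0:ℝ)..1,
        ‖σ₂ t‖ * (γ t * (1 + M) + E * (Γ + E * S₁ * M * A)) := by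
      rw [hρid x₀ hx₀I, norm_neg]
      apply norm_ii_le hx₀I mem1 hx₀I.2 (hσ₂uI hx₀I mem1)
      · exact mul_ii hσ₂nI ((hγc.mul continuousOn_const).add continuousOn_const) mem0 mem1
      · intro s hs
        have hs' : s ∈ Icc (0:ℝ) 1 := ⟨hx₀I.1.trans hs.1, hs.2⟩
        rw [norm_mul]
        apply mul_le_mul_of_nonneg_left _ (norm_nonneg _)
        have : u s = G s + R s := by rw [hRdef]; ring
        rw [this]
        calc ‖G s + R s‖ ≤ ‖G s‖ + ‖R s‖ := norm_add_le _ _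
          _ ≤ γ s + (γ s * M + E * (Γ + E * S₁ * M * A)) :=
              add_le_add le_rfl (hRbound s hs')
          _ = γ s * (1 + M) + E * (Γ + E * S₁ * M * A) := by ring
      · intro s _
        have h0 := hγ0 s
        have hΓ0 : 0 ≤ Γ :=
          intervalIntegral.integral_nonneg zero_le_one
            (fun x _ => mul_nonneg (norm_nonneg _) (sq_nonneg _))
        have hA0 : 0 ≤ A :=
          intervalIntegral.integral_nonneg zero_le_one
            (fun x _ => mul_nonneg (norm_nonneg _) (hγ0 x))
        positivity
    have h2 : (∫ t in (0:ℝ)..1, ‖σ₂ t‖ * (γ t * (1 + M) + E * (Γ + E * S₁ * M * A)))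
        = (1 + M) * A + (E * (Γ + E * S₁ * M * A)) * S₂ := by
      have hsplit : (fun t => ‖σ₂ t‖ * (γ t * (1 + M) + E * (Γ + E * S₁ * M * A)))
          = fun t => (1 + M) * (‖σ₂ t‖ * γ t) + (E * (Γ + E * S₁ * M * A)) * ‖σ₂ t‖ := by
        ext t; ring
      rw [hsplit, intervalIntegral.integral_add
        ((mul_ii hσ₂nI hγc mem0 mem1).const_mul _) (hσ₂nI.const_mul _),
        intervalIntegral.integral_const_mul, intervalIntegral.integral_const_mul]
      rfl
    rw [h2] at h1
    have hQA : A + S₂ * E * E * S₁ * A = Q * A := by rw [hQdef, Qc]; ring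
    nlinarith [h1]
  -- numerics
  have hΓ0 : 0 ≤ Γ := intervalIntegral.integral_nonneg zero_le_one
    (fun x _ => mul_nonneg (norm_nonneg _) (sq_nonneg _))
  have hA0 : 0 ≤ A := intervalIntegral.integral_nonneg zero_le_one
    (fun x _ => mul_nonneg (norm_nonneg _) (hγ0 x))
  have hΓle : Γ ≤ E * S₁ * A := by
    have hmono : (∫ t in (0:ℝ)..1, ‖σ₂ t‖ * γ t ^ 2)
        ≤ ∫ t in (0:ℝ)..1, (E * S₁) * (‖σ₂ t‖ * γ t) := by
      apply intervalIntegral.integral_mono_on zero_le_one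
      · exact mul_ii hσ₂nI ((hγc.mul hγc).congr (fun x _ => by rw [sq]; rfl)) mem0 mem1
      · exact (mul_ii hσ₂nI hγc mem0 mem1).const_mul _
      · intro t ht
        have h1 : γ t ^ 2 ≤ (E * S₁) * γ t := by
          rw [sq]
          exact mul_le_mul_of_nonneg_right (hγbdd t ht) (hγ0 t)
        calc ‖σ₂ t‖ * γ t ^ 2 ≤ ‖σ₂ t‖ * ((E * S₁) * γ t) :=
              mul_le_mul_of_nonneg_left h1 (norm_nonneg _)
          _ = (E * S₁) * (‖σ₂ t‖ * γ t) := by ring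
    calc Γ = ∫ t in (0:ℝ)..1, ‖σ₂ t‖ * γ t ^ 2 := rfl
      _ ≤ ∫ t in (0:ℝ)..1, (E * S₁) * (‖σ₂ t‖ * γ t) := hmono
      _ = E * S₁ * A := by rw [intervalIntegral.integral_const_mul]; rfl
  have hMQA : M ≤ 2 * (Q * A) ∧ M ≤ 1/2 := by
    have h1 : A + S₂ * E * Γ ≤ Q * A := by
      have : S₂ * E * Γ ≤ S₂ * E * (E * S₁ * A) :=
        mul_le_mul_of_nonneg_left hΓle (by positivity)
      rw [hQdef, Qc]
      have hrw : E = Real.exp (2*r) := hEdef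
      nlinarith [this]
    have h2 : Q * A * M ≤ (1/4) * M := mul_le_mul_of_nonneg_right hsmall hM0
    constructor
    · nlinarith [hMineq]
    · nlinarith [hMineq]
  obtain ⟨hM2QA, hMhalf⟩ := hMQA
  -- z 0 bound
  have hz0n : 1/2 ≤ ‖z 0‖ := by
    have h1 : (1:ℂ) = z 0 - ρ 0 := by rw [hρdef]; ring
    have h2 : ‖(1:ℂ)‖ ≤ ‖z 0‖ + ‖ρ 0‖ := by rw [h1]; exact norm_sub_le _ _
    have h3 : ‖ρ 0‖ ≤ M := hmax 0 mem0
    rw [norm_one] at h2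
    linarith
  have hz0ne : z 0 ≠ 0 := by
    intro h
    rw [h, norm_zero] at hz0n
    linarith
  refine ⟨hz0n, ?_⟩
  -- K and W
  set k : ℂ := Kc σ₁ σ₂ μ with hkdef
  have hkform : k = ∫ t in (0:ℝ)..1, σ₂ t * G t := rfl
  set W : ℂ := ∫ t in (0:ℝ)..1, σ₂ t * R t with hWdef
  have hkA : ‖k‖ ≤ A := by
    rw [hkform]
    have h := norm_ii_le (bnd := fun t => ‖σ₂ t‖ * γ t) mem0 mem1 zero_le_one
      (mul_ii hσ₂I hGc mem0 mem1) (mul_ii hσ₂nI hγc mem0 mem1)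
      (fun s _ => by rw [norm_mul]) (fun s _ => mul_nonneg (norm_nonneg _) (hγ0 s))
    exact h
  have hkW : (∫ t in (0:ℝ)..1, σ₂ t * u t) = k + W := by
    rw [hkform, hWdef, ← intervalIntegral.integral_add
      (mul_ii hσ₂I hGc mem0 mem1) (mul_ii hσ₂I hRc mem0 mem1)]
    apply intervalIntegral.integral_congr
    intro t _
    show σ₂ t * u t = σ₂ t * G t + σ₂ t * (u t - G t)
    ring
  have hW : ‖W‖ ≤ M * A + (E * (Γ + E * S₁ * M * A)) * S₂ := by
    rw [hWdef]
    have h := norm_ii_le (bnd := fun t => ‖σ₂ t‖ * (γ t * M + E * (Γ + E * S₁ * M * A)))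
      mem0 mem1 zero_le_one (mul_ii hσ₂I hRc mem0 mem1)
      (mul_ii hσ₂nI ((hγc.mul continuousOn_const).add continuousOn_const) mem0 mem1)
      (fun s hs => by
        rw [norm_mul]
        exact mul_le_mul_of_nonneg_left (hRbound s hs) (norm_nonneg _))
      (fun s _ => by
        have := hγ0 s
        positivity)
    have h2 : (∫ t in (0:ℝ)..1, ‖σ₂ t‖ * (γ t * M + E * (Γ + E * S₁ * M * A)))
        = M * A + (E * (Γ + E * S₁ * M * A)) * S₂ := by
      have hsplit : (fun t => ‖σ₂ t‖ * (γ t * M + E * (Γ + E * S₁ * M * A)))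
          = fun t => M * (‖σ₂ t‖ * γ t) + (E * (Γ + E * S₁ * M * A)) * ‖σ₂ t‖ := by
        ext t; ring
      rw [hsplit, intervalIntegral.integral_add
        ((mul_ii hσ₂nI hγc mem0 mem1).const_mul _) (hσ₂nI.const_mul _),
        intervalIntegral.integral_const_mul, intervalIntegral.integral_const_mul]
      rfl
    rw [← h2]
    exact h
  -- ρ 0
  have hρ0 : ρ 0 = -(k + W) := by
    rw [hρid 0 mem0, hkW]
  -- the key identity
  have hid : 1/(z 0) - 1 - k = (W - ρ 0 * k)/(z 0) := by
    have h2 : (1:ℂ)/(z 0) - 1 - k = (1 - z 0 - k * z 0)/(z 0) := by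
      field_simp
    rw [h2]
    congr 1
    have hz0v : z 0 = 1 + ρ 0 := by rw [hρdef]; ring
    rw [hz0v, hρ0]
    ring
  rw [hid, norm_div]
  have hnum : ‖W - ρ 0 * k‖ ≤ (Q + 1) * (2 * (Q * A)) * A + S₂ * (E * Γ) := by
    have h1 : ‖W - ρ 0 * k‖ ≤ ‖W‖ + ‖ρ 0‖ * ‖k‖ := by
      calc ‖W - ρ 0 * k‖ ≤ ‖W‖ + ‖ρ 0 * k‖ := norm_sub_le _ _
        _ = ‖W‖ + ‖ρ 0‖ * ‖k‖ := by rw [norm_mul]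
    have h2 : ‖ρ 0‖ * ‖k‖ ≤ M * A :=
      mul_le_mul (hmax 0 mem0) hkA (norm_nonneg _) hM0
    have h3 : M * A ≤ 2 * (Q * A) * A := by
      apply mul_le_mul_of_nonneg_right hM2QA hA0
    have h4 : E * (E * S₁ * M * A) * S₂ ≤ (Q - 1) * (M * A) := by
      have hQm1 : Q - 1 = S₂ * E * E * S₁ := by rw [hQdef, Qc]; ring
      rw [hQm1]
      nlinarith [hM0, hA0, mul_nonneg hM0 hA0]
    nlinarith [hW, h1, h2, h3, h4, mul_nonneg hM0 hA0, mul_le_mul_of_nonneg_right hM2QA hA0]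
  have hden : ‖W - ρ 0 * k‖/‖z 0‖ ≤ 2 * ‖W - ρ 0 * k‖ := by
    have h1 : ‖W - ρ 0 * k‖/‖z 0‖ ≤ ‖W - ρ 0 * k‖/(1/2) :=
      div_le_div_of_nonneg_left (norm_nonneg _) (by norm_num) hz0n
    calc ‖W - ρ 0 * k‖/‖z 0‖ ≤ ‖W - ρ 0 * k‖/(1/2) := h1
      _ = 2 * ‖W - ρ 0 * k‖ := by ring
  calc ‖W - ρ 0 * k‖/‖z 0‖ ≤ 2 * ‖W - ρ 0 * k‖ := hden
    _ ≤ 2*((Q + 1) * (2*(Q * A)) * A + S₂ * (E * Γ)) := by linarith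

-- gamma01 : continuity and boundedness
lemma gamma01_contOn (σ₁ : ℝ → ℂ) (hσ₁i : IntegrableOn σ₁ (Icc (0:ℝ) 1) volume) (μ : ℂ) :
    ContinuousOn (fun x => gamma01 σ₁ μ x) (Icc (0:ℝ) 1) := by
  have hσ₁I : IntervalIntegrable σ₁ volume 0 1 := by
    rw [intervalIntegrable_iff, uIoc_of_le zero_le_one]
    exact hσ₁i.mono_set Ioc_subset_Icc_self
  have hinner : IntervalIntegrable
      (fun s => Complex.exp (-(2*Complex.I*μ)*(s:ℝ)) * σ₁ s) volume 0 1 :=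
    hσ₁I.continuousOn_mul (cexp_cont' _).continuousOn
  have h1 : (fun x => gamma01 σ₁ μ x) = fun x => ‖Complex.exp (2*Complex.I*μ*(x:ℝ)) *
      ∫ s in (0:ℝ)..x, Complex.exp (-(2*Complex.I*μ)*(s:ℝ)) * σ₁ s‖ := by
    ext x
    rw [gamma01, pull_exp σ₁ μ 0 x]
  rw [h1]
  apply ContinuousOn.norm
  apply (cexp_cont' (2*Complex.I*μ)).continuousOn.mul
  rw [← uIcc_of_le (zero_le_one : (0:ℝ) ≤ 1)]
  exact intervalIntegral.continuousOn_primitive_interval' hinner left_mem_uIcc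

lemma gamma01_le (σ₁ : ℝ → ℂ) (hσ₁i : IntegrableOn σ₁ (Icc (0:ℝ) 1) volume)
    {r : ℝ} (hr : 0 ≤ r) {μ : ℂ} (him : -r < μ.im) {t : ℝ} (ht : t ∈ Icc (0:ℝ) 1) :
    gamma01 σ₁ μ t ≤ Real.exp (2*r) * S1c σ₁ := by
  have hσ₁I : IntervalIntegrable σ₁ volume 0 1 := by
    rw [intervalIntegrable_iff, uIoc_of_le zero_le_one]
    exact hσ₁i.mono_set Ioc_subset_Icc_self
  have mem0 : (0:ℝ) ∈ Icc (0:ℝ) 1 := left_mem_Icc.mpr zero_le_one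
  have hE0 : (0:ℝ) ≤ Real.exp (2*r) := (Real.exp_pos _).le
  have hfi : IntervalIntegrable
      (fun s => Complex.exp (2*Complex.I*μ*((t:ℝ)-(s:ℝ))) * σ₁ s) volume 0 t := by
    apply IntervalIntegrable.continuousOn_mul
    · apply hσ₁I.mono_set
      rw [uIcc_of_le (zero_le_one : (0:ℝ) ≤ 1)]
      exact uIcc_sub mem0 ht
    · exact (Complex.continuous_exp.comp
        (continuous_const.mul (continuous_const.sub Complex.continuous_ofReal))).continuousOn
  have h := norm_ii_le (bnd := fun s => Real.exp (2*r) * ‖σ₁ s‖) mem0 ht ht.1 hfi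
    (hσ₁I.norm.const_mul _)
    (fun s hs => by
      rw [norm_mul]
      exact mul_le_mul_of_nonneg_right (normExpBound hr him hs.1 hs.2 ht.2) (norm_nonneg _))
    (fun s _ => by positivity)
  calc gamma01 σ₁ μ t
      ≤ ∫ s in (0:ℝ)..1, Real.exp (2*r) * ‖σ₁ s‖ := h
    _ = Real.exp (2*r) * S1c σ₁ := by rw [intervalIntegral.integral_const_mul]; rfl

lemma ii_eq_icc (f : ℝ → ℝ) :
    (∫ t in (0:ℝ)..1, f t) = ∫ t in Icc (0:ℝ) 1, f t := by
  rw [intervalIntegral.integral_of_le zero_le_one, ← integral_Icc_eq_integral_Ioc]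

/-- non-vanishing of `v₂(0)` and asymptotics of `e^{iμ}/v₂(0)`. -/
theorem stmt12
    (p q : ℝ≥0∞) (hp1 : 1 ≤ p) (hp2 : p < 2) (hpq : 1/p + 1/q = 1)
    (σ₁ σ₂ : ℝ → ℂ) (hσ₁m : Measurable σ₁) (hσ₂m : Measurable σ₂)
    (hσ₁ : MemLp σ₁ p (volume.restrict (Icc (0:ℝ) 1)))
    (hσ₂ : MemLp σ₂ p (volume.restrict (Icc (0:ℝ) 1)))
    (r : ℝ) (hr : 0 ≤ r) :
    ∃ ε₀ > 0, ∃ C > 0, ∀ μ : ℂ, -r < μ.im →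
      gamma1 σ₁ q μ ≤ ε₀ → gamma2 σ₂ q μ ≤ ε₀ →
      ∀ v₁ v₂ : ℝ → ℂ, IsDiracSolution σ₁ σ₂ μ v₁ v₂ → v₁ 0 = 0 → v₂ 1 = 1 →
        v₂ 0 ≠ 0
        ∧ ‖Complex.exp (Complex.I * μ) / v₂ 0 - 1 - K2 σ₁ σ₂ μ eFun 0‖
            ≤ C * gammaT σ₁ σ₂ μ := by
  haveI : IsFiniteMeasure (volume.restrict (Icc (0:ℝ) 1)) :=
    ⟨by rw [Measure.restrict_apply_univ]; exact measure_Icc_lt_top⟩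
  have mem0 : (0:ℝ) ∈ Icc (0:ℝ) 1 := left_mem_Icc.mpr zero_le_one
  have mem1 : (1:ℝ) ∈ Icc (0:ℝ) 1 := right_mem_Icc.mpr zero_le_one
  have hσ₁i : IntegrableOn σ₁ (Icc (0:ℝ) 1) volume := hσ₁.integrable hp1
  have hσ₂i : IntegrableOn σ₂ (Icc (0:ℝ) 1) volume := hσ₂.integrable hp1
  set E := Real.exp (2*r) with hEdef
  set Q := Qc σ₁ σ₂ r with hQdef
  set P₂ := (eLpNorm σ₂ p (volume.restrict (Icc (0:ℝ) 1))).toReal with hP₂def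
  have hE0 : (0:ℝ) < E := Real.exp_pos _
  have hS₁0 : 0 ≤ S1c σ₁ :=
    intervalIntegral.integral_nonneg zero_le_one (fun u _ => norm_nonneg _)
  have hS₂0 : 0 ≤ S1c σ₂ :=
    intervalIntegral.integral_nonneg zero_le_one (fun u _ => norm_nonneg _)
  have hQ1 : 1 ≤ Q := by
    rw [hQdef, Qc]
    have : 0 ≤ S1c σ₂ * Real.exp (2*r) * Real.exp (2*r) * S1c σ₁ := by positivity
    linarith
  have hQ0 : 0 < Q := by linarith
  have hP₂0 : 0 ≤ P₂ := ENNReal.toReal_nonneg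
  refine ⟨1/(4*Q*(P₂+1)), by positivity, 4*Q*(Q+1)*S1c σ₂ + 2*S1c σ₂*E + 1, ?_, ?_⟩
  · have h1 : 0 ≤ 4*Q*(Q+1)*S1c σ₂ :=
      mul_nonneg (mul_nonneg (by linarith) (by linarith)) hS₂0
    have h2 : 0 ≤ 2*S1c σ₂*E := by positivity
    linarith
  intro μ him hγ1 _ v₁ v₂ hsol h10 h21
  obtain ⟨g₁, g₂, hg₁, hg₂, hrep₁, hrep₂, hode₁, hode₂⟩ := hsol
  -- ODEs in primitive form
  have hmemae : ∀ᵐ x ∂(volume.restrict (Icc (0:ℝ) 1)), x ∈ Icc (0:ℝ) 1 :=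
    ae_restrict_mem measurableSet_Icc
  have hv₁eq : ∀ x ∈ Icc (0:ℝ) 1, v₁ x = ∫ t in (0:ℝ)..x, g₁ t := by
    intro x hx
    rw [hrep₁ x hx, h10, zero_add]
  have hode1' : ∀ᵐ x ∂(volume.restrict (Icc (0:ℝ) 1)),
      g₁ x + σ₁ x * (v₂ 0 + ∫ t in (0:ℝ)..x, g₂ t)
        = Complex.I * μ * (∫ t in (0:ℝ)..x, g₁ t) := by
    filter_upwards [hode₁, hmemae] with x hx hmem
    rw [← hrep₂ x hmem, ← hv₁eq x hmem]
    exact hx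
  have hode2' : ∀ᵐ x ∂(volume.restrict (Icc (0:ℝ) 1)),
      g₂ x + σ₂ x * (∫ t in (0:ℝ)..x, g₁ t)
        = -(Complex.I * μ) * (v₂ 0 + ∫ t in (0:ℝ)..x, g₂ t) := by
    filter_upwards [hode₂, hmemae] with x hx hmem
    rw [← hrep₂ x hmem, ← hv₁eq x hmem]
    exact hx
  have hV21 : v₂ 0 + (∫ t in (0:ℝ)..1, g₂ t) = 1 := by
    rw [← hrep₂ 1 mem1, h21]
  have hz := z_eq σ₁ σ₂ μ g₁ g₂ hσ₁i hσ₂i hg₁ hg₂ (v₂ 0) hode1' hode2' hV21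
  set z : ℝ → ℂ := fun x =>
    Complex.exp (Complex.I*μ*((x:ℝ)-1)) * (v₂ 0 + ∫ τ in (0:ℝ)..x, g₂ τ) with hzdef
  have hzc : ContinuousOn z (Icc (0:ℝ) 1) := by
    rw [hzdef]
    apply ContinuousOn.mul
    · exact (Complex.continuous_exp.comp
        ((continuous_const.mul (Complex.continuous_ofReal.sub continuous_const)))).continuousOn
    · apply continuousOn_const.add
      rw [← uIcc_of_le (zero_le_one : (0:ℝ) ≤ 1)]
      exact intervalIntegral.continuousOn_primitive_interval' hg₂ left_mem_uIcc
  have hzint : ∀ x ∈ Icc (0:ℝ) 1,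
      z x = 1 - ∫ t in x..(1:ℝ), σ₂ t * ∫ s in (0:ℝ)..t,
        Complex.exp (2*Complex.I*μ*((t:ℝ)-(s:ℝ))) * σ₁ s * z s := hz
  -- measurability of gamma01
  have hγm : AEStronglyMeasurable (fun x => gamma01 σ₁ μ x)
      (volume.restrict (Icc (0:ℝ) 1)) :=
    (gamma01_contOn σ₁ hσ₁i μ).aestronglyMeasurable measurableSet_Icc
  have hγbd : ∀ᵐ x ∂(volume.restrict (Icc (0:ℝ) 1)), ‖gamma01 σ₁ μ x‖ ≤ E * S1c σ₁ := by
    filter_upwards [hmemae] with x hmem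
    rw [Real.norm_of_nonneg
      (show (0:ℝ) ≤ gamma01 σ₁ μ x from by rw [gamma01]; exact norm_nonneg _)]
    exact gamma01_le σ₁ hσ₁i hr him hmem
  have hγq : eLpNorm (fun x => gamma01 σ₁ μ x) q (volume.restrict (Icc (0:ℝ) 1)) ≠ ⊤ :=
    ((memLp_top_of_bound hγm _ hγbd).mono_exponent le_top).eLpNorm_ne_top
  -- Hölder
  have hprodint : Integrable (fun x => ‖σ₂ x‖ * gamma01 σ₁ μ x)
      (volume.restrict (Icc (0:ℝ) 1)) := by
    have h := Integrable.bdd_mul (f := fun x => gamma01 σ₁ μ x) (g := fun x => ‖σ₂ x‖)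
      (c := E * S1c σ₁) hσ₂i.norm hγm hγbd
    apply h.congr
    exact ae_of_all _ fun x => mul_comm _ _
  have hA_holder : Ac σ₁ σ₂ μ ≤ P₂ * gamma1 σ₁ q μ := by
    have h1 : Ac σ₁ σ₂ μ = ∫ x in Icc (0:ℝ) 1, ‖σ₂ x‖ * gamma01 σ₁ μ x :=
      ii_eq_icc _
    rw [h1]
    exact holder_ile p q hpq σ₂ (fun x => gamma01 σ₁ μ x) hσ₂.aestronglyMeasurable hγm
      (fun x => norm_nonneg _) hσ₂.eLpNorm_ne_top hγq hprodint
  have hA0 : 0 ≤ Ac σ₁ σ₂ μ :=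
    intervalIntegral.integral_nonneg zero_le_one
      (fun x _ => mul_nonneg (norm_nonneg _) (norm_nonneg _))
  have hΓ0 : 0 ≤ Gc σ₁ σ₂ μ :=
    intervalIntegral.integral_nonneg zero_le_one
      (fun x _ => mul_nonneg (norm_nonneg _) (sq_nonneg _))
  -- smallness
  have hsmall : Q * Ac σ₁ σ₂ μ ≤ 1/4 := by
    have h1 : Ac σ₁ σ₂ μ ≤ P₂ * (1/(4*Q*(P₂+1))) :=
      hA_holder.trans (mul_le_mul_of_nonneg_left hγ1 hP₂0)
    have hD : (0:ℝ) < 4*Q*(P₂+1) := by nlinarith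
    have h2 : Q * (P₂ * (1/(4*Q*(P₂+1)))) ≤ 1/4 := by
      rw [show Q * (P₂ * (1/(4*Q*(P₂+1)))) = (Q*P₂)/(4*Q*(P₂+1)) from by ring,
        div_le_iff₀ hD]
      nlinarith
    calc Q * Ac σ₁ σ₂ μ ≤ Q * (P₂ * (1/(4*Q*(P₂+1)))) :=
          mul_le_mul_of_nonneg_left h1 (le_of_lt hQ0)
      _ ≤ 1/4 := h2
  obtain ⟨hz0n, hbound⟩ := ESTmain σ₁ σ₂ hσ₁i hσ₂i r hr μ him z hzc hzint hsmall
  have hz0ne : z 0 ≠ 0 := by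
    intro h
    rw [h, norm_zero] at hz0n
    linarith
  -- Cauchy-Schwarz
  have hCS : Ac σ₁ σ₂ μ ^ 2 ≤ S1c σ₂ * Gc σ₁ σ₂ μ := by
    have h := cs_bound (w := fun x => ‖σ₂ x‖) (g := fun x => gamma01 σ₁ μ x)
      hσ₂.aestronglyMeasurable.norm (fun x => norm_nonneg _) hγm
      (fun x => norm_nonneg _) hσ₂i.norm hγbd
    have e1 : Ac σ₁ σ₂ μ = ∫ x in Icc (0:ℝ) 1, ‖σ₂ x‖ * gamma01 σ₁ μ x := ii_eq_icc _
    have e2 : S1c σ₂ = ∫ x in Icc (0:ℝ) 1, ‖σ₂ x‖ := ii_eq_icc _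
    have e3 : Gc σ₁ σ₂ μ = ∫ x in Icc (0:ℝ) 1, ‖σ₂ x‖ * gamma01 σ₁ μ x ^ 2 := ii_eq_icc _
    rw [e1, e2, e3]
    exact h
  -- v₂ 0 in terms of z 0
  have hexp1 : Complex.exp (Complex.I*μ) * Complex.exp (Complex.I*μ*(((0:ℝ):ℂ)-1)) = 1 := by
    rw [← Complex.exp_add]
    have h : Complex.I*μ + Complex.I*μ*(((0:ℝ):ℂ)-1) = 0 := by push_cast; ring
    rw [h, Complex.exp_zero]
  have hz00 : z 0 = Complex.exp (Complex.I*μ*(((0:ℝ):ℂ)-1)) * v₂ 0 := by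
    rw [hzdef]
    beta_reduce
    rw [intervalIntegral.integral_same, add_zero]
  have hv20 : v₂ 0 = Complex.exp (Complex.I*μ) * z 0 := by
    rw [hz00, ← mul_assoc, hexp1, one_mul]
  constructor
  · rw [hv20]
    exact mul_ne_zero (Complex.exp_ne_zero _) hz0ne
  · have hdiv : Complex.exp (Complex.I*μ)/(v₂ 0) = 1/(z 0) := by
      rw [hv20, div_mul_eq_div_div, div_self (Complex.exp_ne_zero _)]
    have hK2 : K2 σ₁ σ₂ μ eFun 0 = Kc σ₁ σ₂ μ := by
      rw [K2, Kc]
      apply intervalIntegral.integral_congr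
      intro t _
      beta_reduce
      congr 1
      apply intervalIntegral.integral_congr
      intro s _
      beta_reduce
      rw [eFun, mul_one]
    rw [hdiv, hK2]
    refine le_trans hbound ?_
    -- numerics
    have hgT : Gc σ₁ σ₂ μ ≤ gammaT σ₁ σ₂ μ := by
      rw [gammaT]
      have h2 : 0 ≤ ∫ s in (0:ℝ)..1, ‖σ₁ s‖ * (gamma02 σ₂ μ s)^2 :=
        intervalIntegral.integral_nonneg zero_le_one
          (fun x _ => mul_nonneg (norm_nonneg _) (sq_nonneg _))
      have h1 : Gc σ₁ σ₂ μ = ∫ s in (0:ℝ)..1, ‖σ₂ s‖ * (gamma01 σ₁ μ s)^2 := rfl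
      linarith
    have hgT0 : 0 ≤ gammaT σ₁ σ₂ μ := le_trans hΓ0 hgT
    have hcoef0 : 0 ≤ 4*Q*(Q+1)*S1c σ₂ + 2*S1c σ₂*E := by
      have h1 : 0 ≤ 4*Q*(Q+1)*S1c σ₂ :=
        mul_nonneg (mul_nonneg (by linarith) (by linarith)) hS₂0
      have h2 : 0 ≤ 2*S1c σ₂*E := by positivity
      linarith
    calc 2*((Q + 1) * (2*(Q * Ac σ₁ σ₂ μ)) * Ac σ₁ σ₂ μ + S1c σ₂ * (E * Gc σ₁ σ₂ μ))
        = 4*Q*(Q+1) * Ac σ₁ σ₂ μ ^ 2 + 2*S1c σ₂*E * Gc σ₁ σ₂ μ := by ring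
      _ ≤ 4*Q*(Q+1) * (S1c σ₂ * Gc σ₁ σ₂ μ) + 2*S1c σ₂*E * Gc σ₁ σ₂ μ := by
          have h := mul_le_mul_of_nonneg_left hCS
            (show (0:ℝ) ≤ 4*Q*(Q+1) from mul_nonneg (by linarith) (by linarith))
          linarith
      _ = (4*Q*(Q+1)*S1c σ₂ + 2*S1c σ₂*E) * Gc σ₁ σ₂ μ := by ring
      _ ≤ (4*Q*(Q+1)*S1c σ₂ + 2*S1c σ₂*E) * gammaT σ₁ σ₂ μ :=
          mul_le_mul_of_nonneg_left hgT hcoef0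
      _ ≤ (4*Q*(Q+1)*S1c σ₂ + 2*S1c σ₂*E + 1) * gammaT σ₁ σ₂ μ := by nlinarith [hgT0]
end
end

section
/- For every μ ∈ ℂ and every x ∈ [0,1], the following two exact identities hold: (i) −(K₂e)(0) ∫₀ˣ e^{−2iμt} σ₁(t) dt + ∫₀ˣ e^{−2iμt} σ₁(t) (K₂e)(t) dt = −∫₀ˣ e^{2iμs} σ₂(s) (∫ₛˣ e^{−2iμt} σ₁(t) dt)(∫₀ˢ e^{−2iμτ} σ₁(τ) dτ) ds; (ii) ((K₂e)(x) − (K₂e)(0)) ∫₀¹ e^{2iμt} σ₂(t) dt + ∫₀¹ e^{2iμt} σ₂(t) (K₁e)(t) dt − ∫ₓ¹ e^{2iμt} σ₂(t) (K₁e)(t) dt = −∫₀ˣ e^{2iμt} σ₂(t) ∫₀ᵗ e^{−2iμs} σ₁(s) ∫₀ˢ e^{2iμτ} σ₂(τ) dτ ds dt. -/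
open MeasureTheory Set
open scoped ENNReal

noncomputable section

namespace Stmt18Aux

lemma triangle_swap (g h : ℝ → ℂ) (x : ℝ) (hx : 0 ≤ x)
    (hg : IntegrableOn g (Ioc 0 x)) (hh : IntegrableOn h (Ioc 0 x)) :
    ∫ t in (0:ℝ)..x, g t * ∫ s in (0:ℝ)..t, h s
      = ∫ s in (0:ℝ)..x, h s * ∫ t in s..x, g t := by
  rw [intervalIntegral.integral_of_le hx, intervalIntegral.integral_of_le hx]
  set μ := volume.restrict (Ioc (0:ℝ) x) with hμ
  set F : ℝ × ℝ → ℂ := fun p => ({q : ℝ × ℝ | q.2 ≤ q.1}).indicator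
    (fun q => g q.1 * h q.2) p with hF
  have hS : MeasurableSet {q : ℝ × ℝ | q.2 ≤ q.1} :=
    measurableSet_le measurable_snd measurable_fst
  have hg' : Integrable g μ := hg
  have hh' : Integrable h μ := hh
  have hmul : Integrable (fun z : ℝ × ℝ => g z.1 * h z.2) (μ.prod μ) := hg'.mul_prod hh'
  have hFint : Integrable F (μ.prod μ) := by
    refine Integrable.mono' (hg'.norm.mul_prod hh'.norm)
      (hmul.aestronglyMeasurable.indicator hS) ?_
    filter_upwards with p
    by_cases hp : p ∈ {q : ℝ × ℝ | q.2 ≤ q.1}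
    · simp [hF, Set.indicator_of_mem hp, norm_mul]
    · simp [hF, Set.indicator_of_notMem hp, norm_mul, mul_nonneg, norm_nonneg]
  have key := MeasureTheory.integral_integral_swap (f := fun t s => F (t, s))
    (μ := μ) (ν := μ) (by exact hFint)
  have L : ∫ t, (∫ s, F (t, s) ∂μ) ∂μ = ∫ t in Ioc (0:ℝ) x, g t * ∫ s in (0:ℝ)..t, h s := by
    refine setIntegral_congr_fun measurableSet_Ioc (fun t ht => ?_)
    have h1 : (fun s => F (t, s)) = (Iic t).indicator (fun s => g t * h s) := by
      funext s; simp [hF, Set.indicator_apply, Set.mem_Iic]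
    rw [h1, hμ, MeasureTheory.integral_indicator measurableSet_Iic,
      Measure.restrict_restrict measurableSet_Iic]
    have h2 : Iic t ∩ Ioc 0 x = Ioc 0 t := by
      ext s; simp only [mem_inter_iff, mem_Iic, mem_Ioc]
      constructor
      · rintro ⟨h1', h2', _⟩; exact ⟨h2', h1'⟩
      · rintro ⟨h1', h2'⟩; exact ⟨h2', h1', h2'.trans ht.2⟩
    rw [h2, integral_const_mul, intervalIntegral.integral_of_le ht.1.le]
  have R : ∫ s, (∫ t, F (t, s) ∂μ) ∂μ = ∫ s in Ioc (0:ℝ) x, h s * ∫ t in s..x, g t := by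
    refine setIntegral_congr_fun measurableSet_Ioc (fun s hs => ?_)
    have h1 : (fun t => F (t, s)) = (Ici s).indicator (fun t => g t * h s) := by
      funext t; simp [hF, Set.indicator_apply, Set.mem_Ici]
    rw [h1, hμ, MeasureTheory.integral_indicator measurableSet_Ici,
      Measure.restrict_restrict measurableSet_Ici]
    have h2 : Ici s ∩ Ioc 0 x = Icc s x := by
      ext t; simp only [mem_inter_iff, mem_Ici, mem_Ioc, mem_Icc]
      constructor
      · rintro ⟨h1', _, h3'⟩; exact ⟨h1', h3'⟩
      · rintro ⟨h1', h2'⟩; exact ⟨h1', hs.1.trans_le h1', h2'⟩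
    rw [h2, MeasureTheory.integral_Icc_eq_integral_Ioc, integral_mul_const,
      intervalIntegral.integral_of_le hs.2, mul_comm]
  rw [← L, ← R]; exact key

lemma sub01 {a b : ℝ} (h0 : 0 ≤ a) (hab : a ≤ b) (h1 : b ≤ 1) :
    uIcc a b ⊆ uIcc (0:ℝ) 1 := by
  rw [uIcc_of_le hab, uIcc_of_le zero_le_one]; exact Icc_subset_Icc h0 h1

lemma core1 (g f : ℝ → ℂ) (hg : IntervalIntegrable g volume 0 1)
    (hf : IntervalIntegrable f volume 0 1) (x : ℝ) (hx0 : 0 ≤ x) (hx1 : x ≤ 1) :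
    -(∫ r in (0:ℝ)..1, f r * ∫ τ in (0:ℝ)..r, g τ) * (∫ t in (0:ℝ)..x, g t)
      + ∫ t in (0:ℝ)..x, g t * ∫ r in t..(1:ℝ), f r * ∫ τ in (0:ℝ)..r, g τ
    = -∫ s in (0:ℝ)..x, f s * (∫ t in s..x, g t) * ∫ τ in (0:ℝ)..s, g τ := by
  have hAcont : ContinuousOn (fun r => ∫ τ in (0:ℝ)..r, g τ) (uIcc (0:ℝ) 1) :=
    intervalIntegral.continuousOn_primitive_interval' hg left_mem_uIcc
  have hfA : IntervalIntegrable (fun r => f r * ∫ τ in (0:ℝ)..r, g τ) volume 0 1 :=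
    hf.mul_continuousOn hAcont
  have hfA0x : IntervalIntegrable (fun r => f r * ∫ τ in (0:ℝ)..r, g τ) volume 0 x :=
    hfA.mono_set (sub01 le_rfl hx0 hx1)
  have hg0x : IntervalIntegrable g volume 0 x := hg.mono_set (sub01 le_rfl hx0 hx1)
  have h1 : EqOn (fun t => g t * ∫ r in t..(1:ℝ), f r * ∫ τ in (0:ℝ)..r, g τ)
      (fun t => g t * (∫ r in (0:ℝ)..1, f r * ∫ τ in (0:ℝ)..r, g τ)
        - g t * ∫ r in (0:ℝ)..t, f r * ∫ τ in (0:ℝ)..r, g τ) (uIcc (0:ℝ) x) := by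
    intro t ht
    rw [uIcc_of_le hx0] at ht
    have hfA0t : IntervalIntegrable (fun r => f r * ∫ τ in (0:ℝ)..r, g τ) volume 0 t :=
      hfA.mono_set (sub01 le_rfl ht.1 (ht.2.trans hx1))
    simp only
    rw [← intervalIntegral.integral_interval_sub_left hfA hfA0t]
    ring
  have hgP : IntervalIntegrable
      (fun t => g t * ∫ r in (0:ℝ)..t, f r * ∫ τ in (0:ℝ)..r, g τ) volume 0 x :=
    hg0x.mul_continuousOn (intervalIntegral.continuousOn_primitive_interval' hfA0x left_mem_uIcc)
  rw [intervalIntegral.integral_congr h1,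
    intervalIntegral.integral_sub (hg0x.mul_const _) hgP,
    intervalIntegral.integral_mul_const,
    triangle_swap g (fun r => f r * ∫ τ in (0:ℝ)..r, g τ) x hx0 hg0x.1 hfA0x.1]
  have h2 : EqOn (fun s => (f s * ∫ τ in (0:ℝ)..s, g τ) * ∫ t in s..x, g t)
      (fun s => f s * (∫ t in s..x, g t) * ∫ τ in (0:ℝ)..s, g τ) (uIcc (0:ℝ) x) :=
    fun s _ => by simp only; ring
  rw [intervalIntegral.integral_congr h2]
  ring

lemma core2 (g f K : ℝ → ℂ) (hg : IntervalIntegrable g volume 0 1)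
    (hf : IntervalIntegrable f volume 0 1)
    (hK : ∀ t ∈ Icc (0:ℝ) 1,
      K t = ∫ s in (0:ℝ)..t, g s * ((∫ τ in (0:ℝ)..1, f τ) - ∫ τ in (0:ℝ)..s, f τ))
    (x : ℝ) (hx0 : 0 ≤ x) (hx1 : x ≤ 1) :
    ((∫ r in x..(1:ℝ), f r * ∫ τ in (0:ℝ)..r, g τ)
        - ∫ r in (0:ℝ)..1, f r * ∫ τ in (0:ℝ)..r, g τ) * (∫ t in (0:ℝ)..1, f t)
      + (∫ t in (0:ℝ)..1, f t * K t) - ∫ t in x..(1:ℝ), f t * K t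
    = -∫ t in (0:ℝ)..x, f t * ∫ s in (0:ℝ)..t, g s * ∫ τ in (0:ℝ)..s, f τ := by
  have hAcont : ContinuousOn (fun r => ∫ τ in (0:ℝ)..r, g τ) (uIcc (0:ℝ) 1) :=
    intervalIntegral.continuousOn_primitive_interval' hg left_mem_uIcc
  have hBcont : ContinuousOn (fun r => ∫ τ in (0:ℝ)..r, f τ) (uIcc (0:ℝ) 1) :=
    intervalIntegral.continuousOn_primitive_interval' hf left_mem_uIcc
  have hgB : IntervalIntegrable (fun s => g s * ∫ τ in (0:ℝ)..s, f τ) volume 0 1 :=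
    hg.mul_continuousOn hBcont
  have hRcont : ContinuousOn
      (fun t => ∫ s in (0:ℝ)..t, g s * ∫ τ in (0:ℝ)..s, f τ) (uIcc (0:ℝ) 1) :=
    intervalIntegral.continuousOn_primitive_interval' hgB left_mem_uIcc
  have hfR : IntervalIntegrable
      (fun t => f t * ∫ s in (0:ℝ)..t, g s * ∫ τ in (0:ℝ)..s, f τ) volume 0 1 :=
    hf.mul_continuousOn hRcont
  have hfA : IntervalIntegrable (fun r => f r * ∫ τ in (0:ℝ)..r, g τ) volume 0 1 :=
    hf.mul_continuousOn hAcont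
  have Kstep : ∀ t ∈ Icc (0:ℝ) 1,
      K t = (∫ τ in (0:ℝ)..t, g τ) * (∫ τ in (0:ℝ)..1, f τ)
        - ∫ s in (0:ℝ)..t, g s * ∫ τ in (0:ℝ)..s, f τ := by
    intro t ht
    rw [hK t ht]
    have hEq : EqOn (fun s => g s * ((∫ τ in (0:ℝ)..1, f τ) - ∫ τ in (0:ℝ)..s, f τ))
        (fun s => g s * (∫ τ in (0:ℝ)..1, f τ) - g s * ∫ τ in (0:ℝ)..s, f τ)
        (uIcc (0:ℝ) t) := fun s _ => by simp only; ring
    rw [intervalIntegral.integral_congr hEq,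
      intervalIntegral.integral_sub
        ((hg.mono_set (sub01 le_rfl ht.1 ht.2)).mul_const _)
        (hgB.mono_set (sub01 le_rfl ht.1 ht.2)),
      intervalIntegral.integral_mul_const]
  have key : ∀ a b : ℝ, 0 ≤ a → a ≤ b → b ≤ 1 →
      (∫ t in a..b, f t * K t)
        = (∫ t in a..b, f t * ∫ τ in (0:ℝ)..t, g τ) * (∫ τ in (0:ℝ)..1, f τ)
          - ∫ t in a..b, f t * ∫ s in (0:ℝ)..t, g s * ∫ τ in (0:ℝ)..s, f τ := by
    intro a b h0 hab h1
    have hEq : EqOn (fun t => f t * K t)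
        (fun t => (f t * ∫ τ in (0:ℝ)..t, g τ) * (∫ τ in (0:ℝ)..1, f τ)
          - f t * ∫ s in (0:ℝ)..t, g s * ∫ τ in (0:ℝ)..s, f τ) (uIcc a b) := by
      intro t ht
      rw [uIcc_of_le hab] at ht
      simp only
      rw [Kstep t ⟨h0.trans ht.1, ht.2.trans h1⟩]
      ring
    rw [intervalIntegral.integral_congr hEq,
      intervalIntegral.integral_sub
        ((hfA.mono_set (sub01 h0 hab h1)).mul_const _)
        (hfR.mono_set (sub01 h0 hab h1)),
      intervalIntegral.integral_mul_const]
  rw [key 0 1 le_rfl zero_le_one le_rfl, key x 1 hx0 hx1 le_rfl]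
  have hadj : (∫ t in (0:ℝ)..x, f t * ∫ s in (0:ℝ)..t, g s * ∫ τ in (0:ℝ)..s, f τ)
      + ∫ t in x..(1:ℝ), f t * ∫ s in (0:ℝ)..t, g s * ∫ τ in (0:ℝ)..s, f τ
      = ∫ t in (0:ℝ)..1, f t * ∫ s in (0:ℝ)..t, g s * ∫ τ in (0:ℝ)..s, f τ :=
    intervalIntegral.integral_add_adjacent_intervals
      (hfR.mono_set (sub01 le_rfl hx0 hx1)) (hfR.mono_set (sub01 hx0 hx1 le_rfl))
  rw [← hadj]
  ring

end Stmt18Aux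

/-- two further exact identities relating `K₁` and `K₂`. -/
theorem stmt18
    (p : ℝ≥0∞) (hp1 : 1 ≤ p) (hp2 : p < 2)
    (σ₁ σ₂ : ℝ → ℂ) (hσ₁m : Measurable σ₁) (hσ₂m : Measurable σ₂)
    (hσ₁ : MemLp σ₁ p (volume.restrict (Icc (0:ℝ) 1)))
    (hσ₂ : MemLp σ₂ p (volume.restrict (Icc (0:ℝ) 1))) :
    ∀ μ : ℂ, ∀ x ∈ Icc (0:ℝ) 1,
      (-(K2 σ₁ σ₂ μ eFun 0) * (∫ t in (0:ℝ)..x, Complex.exp (-(2*Complex.I*μ*t)) * σ₁ t)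
          + (∫ t in (0:ℝ)..x, Complex.exp (-(2*Complex.I*μ*t)) * σ₁ t * K2 σ₁ σ₂ μ eFun t)
        = -∫ s in (0:ℝ)..x, Complex.exp (2*Complex.I*μ*s) * σ₂ s *
            (∫ t in s..x, Complex.exp (-(2*Complex.I*μ*t)) * σ₁ t) *
            (∫ τ in (0:ℝ)..s, Complex.exp (-(2*Complex.I*μ*τ)) * σ₁ τ))
      ∧ ((K2 σ₁ σ₂ μ eFun x - K2 σ₁ σ₂ μ eFun 0) *
            (∫ t in (0:ℝ)..1, Complex.exp (2*Complex.I*μ*t) * σ₂ t)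
          + (∫ t in (0:ℝ)..1, Complex.exp (2*Complex.I*μ*t) * σ₂ t * K1 σ₁ σ₂ μ eFun t)
          - (∫ t in x..(1:ℝ), Complex.exp (2*Complex.I*μ*t) * σ₂ t * K1 σ₁ σ₂ μ eFun t)
        = -∫ t in (0:ℝ)..x, Complex.exp (2*Complex.I*μ*t) * σ₂ t *
            ∫ s in (0:ℝ)..t, Complex.exp (-(2*Complex.I*μ*s)) * σ₁ s *
              ∫ τ in (0:ℝ)..s, Complex.exp (2*Complex.I*μ*τ) * σ₂ τ) := by
  
  haveI : IsFiniteMeasure (volume.restrict (Icc (0:ℝ) 1)) :=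
    ⟨by rw [Measure.restrict_apply_univ]; exact measure_Icc_lt_top⟩
  intro μ x hx
  obtain ⟨hx0, hx1⟩ := hx
  have hσ₁i : IntegrableOn σ₁ (Icc (0:ℝ) 1) volume := hσ₁.integrable hp1
  have hσ₂i : IntegrableOn σ₂ (Icc (0:ℝ) 1) volume := hσ₂.integrable hp1
  have hσ₁I : IntervalIntegrable σ₁ volume 0 1 := by
    apply IntegrableOn.intervalIntegrable; rwa [uIcc_of_le zero_le_one]
  have hσ₂I : IntervalIntegrable σ₂ volume 0 1 := by
    apply IntegrableOn.intervalIntegrable; rwa [uIcc_of_le zero_le_one]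
  have hcontm : Continuous (fun t : ℝ => Complex.exp (-(2*Complex.I*μ*t))) := by fun_prop
  have hcontp : Continuous (fun t : ℝ => Complex.exp (2*Complex.I*μ*t)) := by fun_prop
  have hg : IntervalIntegrable (fun t => Complex.exp (-(2*Complex.I*μ*t)) * σ₁ t) volume 0 1 :=
    hσ₁I.continuousOn_mul hcontm.continuousOn
  have hf : IntervalIntegrable (fun t => Complex.exp (2*Complex.I*μ*t) * σ₂ t) volume 0 1 :=
    hσ₂I.continuousOn_mul hcontp.continuousOn
  have hK2 : ∀ t : ℝ, K2 σ₁ σ₂ μ eFun t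
      = ∫ r in t..(1:ℝ), Complex.exp (2*Complex.I*μ*r) * σ₂ r *
          ∫ τ in (0:ℝ)..r, Complex.exp (-(2*Complex.I*μ*τ)) * σ₁ τ := by
    intro t
    simp only [K2]
    refine intervalIntegral.integral_congr fun r _ => ?_
    have h1 : ∀ s : ℝ, Complex.exp (2*Complex.I*μ*((r:ℂ) - (s:ℂ))) * σ₁ s * eFun s
        = Complex.exp (2*Complex.I*μ*r) * (Complex.exp (-(2*Complex.I*μ*s)) * σ₁ s) := by
      intro s
      simp only [eFun, mul_one]
      rw [show 2*Complex.I*μ*((r:ℂ) - (s:ℂ))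
          = 2*Complex.I*μ*(r:ℂ) + -(2*Complex.I*μ*(s:ℂ)) by ring, Complex.exp_add]
      ring
    simp only [h1]
    rw [intervalIntegral.integral_const_mul]
    ring
  have hK1 : ∀ t ∈ Icc (0:ℝ) 1, K1 σ₁ σ₂ μ eFun t
      = ∫ s in (0:ℝ)..t, Complex.exp (-(2*Complex.I*μ*s)) * σ₁ s *
          ((∫ τ in (0:ℝ)..1, Complex.exp (2*Complex.I*μ*τ) * σ₂ τ)
            - ∫ τ in (0:ℝ)..s, Complex.exp (2*Complex.I*μ*τ) * σ₂ τ) := by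
    intro t ht
    simp only [K1]
    refine intervalIntegral.integral_congr fun s hs => ?_
    rw [uIcc_of_le ht.1] at hs
    have h1 : ∀ r : ℝ, Complex.exp (2*Complex.I*μ*((r:ℂ) - (s:ℂ))) * σ₂ r * eFun r
        = Complex.exp (-(2*Complex.I*μ*s)) * (Complex.exp (2*Complex.I*μ*r) * σ₂ r) := by
      intro r
      simp only [eFun, mul_one]
      rw [show 2*Complex.I*μ*((r:ℂ) - (s:ℂ))
          = -(2*Complex.I*μ*(s:ℂ)) + 2*Complex.I*μ*(r:ℂ) by ring, Complex.exp_add]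
      ring
    simp only [h1]
    rw [intervalIntegral.integral_const_mul,
      ← intervalIntegral.integral_interval_sub_left hf
        (hf.mono_set (Stmt18Aux.sub01 le_rfl hs.1 (hs.2.trans ht.2)))]
    ring
  constructor
  · have h := Stmt18Aux.core1 _ _ hg hf x hx0 hx1
    simp only [hK2]
    exact h
  · have h := Stmt18Aux.core2 _ _ (K1 σ₁ σ₂ μ eFun) hg hf hK1 x hx0 hx1
    simp only [hK2]
    exact h
end
end

section
/- Let d > 0. Then for every μ ∈ ℂ with |Im μ| ≤ d and every x ∈ [0,1], one has |L(x,μ)| ≤ 2 e^{4d} ‖σ₁‖_{L¹[0,1]} α̃(μ), where L(x,μ) = ∫₀ˣ e^{2iμ(x−t)} σ₁(t) ∫₀ᵗ σ₂(s) ∫₀ˢ e^{2iμ(s−τ)} σ₁(τ) ∫₀^τ e^{2iμy} σ₂(y) dy dτ ds dt. -/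
open MeasureTheory Set
open scoped ENNReal

noncomputable section

/-- The quadruple integral `L(x,μ)`. -/
def Lfun (σ₁ σ₂ : ℝ → ℂ) (μ : ℂ) (x : ℝ) : ℂ :=
  ∫ t in (0:ℝ)..x, Complex.exp (2*Complex.I*μ*(x - t)) * σ₁ t *
    ∫ s in (0:ℝ)..t, σ₂ s *
      ∫ τ in (0:ℝ)..s, Complex.exp (2*Complex.I*μ*(s - τ)) * σ₁ τ *
        ∫ y in (0:ℝ)..τ, Complex.exp (2*Complex.I*μ*y) * σ₂ y

/-- `α₀(x,μ)`. -/
def alpha0 (σ₁ σ₂ : ℝ → ℂ) (μ : ℂ) (x : ℝ) : ℝ :=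
  (‖∫ t in (0:ℝ)..x, Complex.exp (-(2*Complex.I*μ*t)) * σ₁ t‖
      + ‖∫ t in (0:ℝ)..x, Complex.exp (2*Complex.I*μ*t) * σ₁ t‖)
    + (‖∫ t in (0:ℝ)..x, Complex.exp (-(2*Complex.I*μ*t)) * σ₂ t‖
      + ‖∫ t in (0:ℝ)..x, Complex.exp (2*Complex.I*μ*t) * σ₂ t‖)

/-- `α̃(μ) = ∫₀¹ σ(s) α₀(s,μ)² ds` with `σ = max(|σ₁|,|σ₂|)`. -/
def alphaT (σ₁ σ₂ : ℝ → ℂ) (μ : ℂ) : ℝ :=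
  ∫ s in (0:ℝ)..1, (max ‖σ₁ s‖ ‖σ₂ s‖) * (alpha0 σ₁ σ₂ μ s)^2

/-- Fubini for primitives: `∫ u·V + ∫ v·U = U(t)·V(t)`. -/
lemma fubini_prim {u v : ℝ → ℂ} {t : ℝ} (ht : 0 ≤ t)
    (hu : IntervalIntegrable u volume 0 t) (hv : IntervalIntegrable v volume 0 t) :
    (∫ s in (0:ℝ)..t, u s * ∫ y in (0:ℝ)..s, v y)
      + (∫ s in (0:ℝ)..t, v s * ∫ y in (0:ℝ)..s, u y)
      = (∫ s in (0:ℝ)..t, u s) * (∫ s in (0:ℝ)..t, v s) := by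
  have hu' : Integrable u (volume.restrict (Ioc (0:ℝ) t)) :=
    (intervalIntegrable_iff_integrableOn_Ioc_of_le ht).mp hu
  have hv' : Integrable v (volume.restrict (Ioc (0:ℝ) t)) :=
    (intervalIntegrable_iff_integrableOn_Ioc_of_le ht).mp hv
  set ν := volume.restrict (Ioc (0:ℝ) t) with hνdef
  have hmaju : Integrable (fun p : ℝ × ℝ => u p.1 * v p.2) (ν.prod ν) := hu'.mul_prod hv'
  have hWint : Integrable (fun p : ℝ × ℝ => if p.2 ≤ p.1 then u p.1 * v p.2 else 0) (ν.prod ν) := by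
    have : (fun p : ℝ × ℝ => if p.2 ≤ p.1 then u p.1 * v p.2 else 0)
        = Set.indicator {p : ℝ × ℝ | p.2 ≤ p.1} (fun p => u p.1 * v p.2) := by
      ext p; simp [Set.indicator_apply]
    rw [this]
    exact hmaju.indicator (measurableSet_le measurable_snd measurable_fst)
  have hW'int : Integrable (fun p : ℝ × ℝ => if p.1 ≤ p.2 then u p.1 * v p.2 else 0) (ν.prod ν) := by
    have : (fun p : ℝ × ℝ => if p.1 ≤ p.2 then u p.1 * v p.2 else 0)
        = Set.indicator {p : ℝ × ℝ | p.1 ≤ p.2} (fun p => u p.1 * v p.2) := by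
      ext p; simp [Set.indicator_apply]
    rw [this]
    exact hmaju.indicator (measurableSet_le measurable_fst measurable_snd)
  have hswap : Integrable (fun z : ℝ × ℝ => if z.2 ≤ z.1 then u z.2 * v z.1 else 0) (ν.prod ν) :=
    hW'int.swap
  have hsub : ∀ s ∈ Ioc (0:ℝ) t, ∀ w : ℝ → ℂ,
      (∫ y in (0:ℝ)..s, w y) = ∫ y, (Iic s).indicator w y ∂ν := by
    intro s hs w
    have hset : Iic s ∩ Ioc (0:ℝ) t = Ioc (0:ℝ) s := by
      ext y
      constructor
      · rintro ⟨h1, h2, h3⟩; exact ⟨h2, h1⟩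
      · rintro ⟨h1, h2⟩; exact ⟨h2, h1, h2.trans hs.2⟩
    rw [intervalIntegral.integral_of_le hs.1.le, hνdef,
      integral_indicator measurableSet_Iic, Measure.restrict_restrict measurableSet_Iic, hset]
  have e1 : (∫ s in (0:ℝ)..t, u s * ∫ y in (0:ℝ)..s, v y)
      = ∫ p, (if p.2 ≤ p.1 then u p.1 * v p.2 else 0) ∂(ν.prod ν) := by
    rw [MeasureTheory.integral_prod _ hWint, intervalIntegral.integral_of_le ht]
    apply setIntegral_congr_fun measurableSet_Ioc
    intro s hs
    show u s * (∫ y in (0:ℝ)..s, v y) = ∫ y, (if y ≤ s then u s * v y else 0) ∂ν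
    rw [hsub s hs v, ← MeasureTheory.integral_const_mul]
    congr 1
    funext y
    simp [Set.indicator_apply, mul_ite]
  have e2 : (∫ s in (0:ℝ)..t, v s * ∫ y in (0:ℝ)..s, u y)
      = ∫ p, (if p.1 ≤ p.2 then u p.1 * v p.2 else 0) ∂(ν.prod ν) := by
    calc (∫ s in (0:ℝ)..t, v s * ∫ y in (0:ℝ)..s, u y)
        = ∫ p, (if p.2 ≤ p.1 then u p.2 * v p.1 else 0) ∂(ν.prod ν) := by
          rw [MeasureTheory.integral_prod _ hswap, intervalIntegral.integral_of_le ht]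
          apply setIntegral_congr_fun measurableSet_Ioc
          intro s hs
          show v s * (∫ y in (0:ℝ)..s, u y) = ∫ y, (if y ≤ s then u y * v s else 0) ∂ν
          rw [hsub s hs u, ← MeasureTheory.integral_const_mul]
          congr 1
          funext y
          simp only [Set.indicator_apply, mem_Iic, mul_ite, mul_zero]
          by_cases h : y ≤ s <;> simp [h, mul_comm]
      _ = ∫ p, (if p.1 ≤ p.2 then u p.1 * v p.2 else 0) ∂(ν.prod ν) :=
          MeasureTheory.integral_prod_swap
            (fun p : ℝ × ℝ => if p.1 ≤ p.2 then u p.1 * v p.2 else 0)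
  rw [e1, e2, ← integral_add hWint hW'int]
  have hdiag : (ν.prod ν) {p : ℝ × ℝ | p.1 = p.2} = 0 := by
    rw [Measure.prod_apply (measurableSet_eq_fun measurable_fst measurable_snd)]
    have : ∀ s : ℝ, Prod.mk s ⁻¹' {p : ℝ × ℝ | p.1 = p.2} = {s} := by
      intro s; ext y; simp [eq_comm]
    simp [this]
  have hae : ∀ᵐ p ∂(ν.prod ν),
      ((if p.2 ≤ p.1 then u p.1 * v p.2 else 0) + (if p.1 ≤ p.2 then u p.1 * v p.2 else 0))
        = u p.1 * v p.2 := by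
    have hne : ∀ᵐ p ∂(ν.prod ν), p.1 ≠ p.2 := by
      rw [MeasureTheory.ae_iff]
      simpa using hdiag
    filter_upwards [hne] with p hp
    rcases le_or_gt p.2 p.1 with h | h
    · have h2 : ¬ p.1 ≤ p.2 := fun hc => hp (le_antisymm hc h)
      simp [h, h2]
    · have h2 : ¬ p.2 ≤ p.1 := not_le.mpr h
      simp [h2, h.le]
  rw [integral_congr_ae hae, MeasureTheory.integral_prod_mul,
    intervalIntegral.integral_of_le ht, intervalIntegral.integral_of_le ht]

/-- Cauchy–Schwarz for weighted interval integrals. -/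
lemma cs_weighted {w h : ℝ → ℝ} (hw : ∀ s, 0 ≤ w s)
    (hwi : IntervalIntegrable w volume 0 1)
    (hwh : IntervalIntegrable (fun s => w s * h s) volume 0 1)
    (hwh2 : IntervalIntegrable (fun s => w s * h s ^ 2) volume 0 1) :
    (∫ s in (0:ℝ)..1, w s * h s) ^ 2
      ≤ (∫ s in (0:ℝ)..1, w s) * ∫ s in (0:ℝ)..1, w s * h s ^ 2 := by
  have key : ∀ lam : ℝ, 0 ≤ (∫ s in (0:ℝ)..1, w s) * (lam * lam)
      + ((-2:ℝ) * ∫ s in (0:ℝ)..1, w s * h s) * lam + (∫ s in (0:ℝ)..1, w s * h s ^ 2) := by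
    intro lam
    have h1 : (0:ℝ) ≤ ∫ s in (0:ℝ)..1, w s * (h s - lam) ^ 2 :=
      intervalIntegral.integral_nonneg (by norm_num)
        (fun s _ => mul_nonneg (hw s) (sq_nonneg _))
    have h2 : (∫ s in (0:ℝ)..1, w s * (h s - lam) ^ 2)
        = (lam * lam) * (∫ s in (0:ℝ)..1, w s)
          + (((-2:ℝ) * lam) * ∫ s in (0:ℝ)..1, w s * h s)
          + (∫ s in (0:ℝ)..1, w s * h s ^ 2) := by
      have hptw : EqOn (fun s => w s * (h s - lam) ^ 2)
          (fun s => (lam * lam) * w s + (((-2:ℝ) * lam) * (w s * h s) + w s * h s ^ 2))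
          (Set.uIcc (0:ℝ) 1) := fun s _ => by ring
      rw [intervalIntegral.integral_congr hptw,
        intervalIntegral.integral_add ((hwi.const_mul _))
          ((hwh.const_mul _).add hwh2),
        intervalIntegral.integral_add (hwh.const_mul _) hwh2,
        intervalIntegral.integral_const_mul, intervalIntegral.integral_const_mul]
      ring
    rw [h2] at h1
    nlinarith [h1]
  have hd := discrim_le_zero key
  rw [discrim] at hd
  nlinarith [hd]

lemma norm_exp_pos_le {μ : ℂ} {d : ℝ} (hμ : |μ.im| ≤ d) {c : ℝ} (h0 : 0 ≤ c) (h1 : c ≤ 1) :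
    ‖Complex.exp (2*Complex.I*μ*(c:ℂ))‖ ≤ Real.exp (2*d) := by
  rw [Complex.norm_exp]
  apply Real.exp_le_exp.mpr
  have hre : (2*Complex.I*μ*(c:ℂ)).re = -(2*μ.im*c) := by
    simp [Complex.mul_re, Complex.mul_im]
  rw [hre]
  have hd := abs_le.mp hμ
  have hd0 : 0 ≤ d := (abs_nonneg _).trans hμ
  nlinarith [hd.1, hd.2]

lemma norm_exp_neg_le {μ : ℂ} {d : ℝ} (hμ : |μ.im| ≤ d) {c : ℝ} (h0 : 0 ≤ c) (h1 : c ≤ 1) :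
    ‖Complex.exp (-(2*Complex.I*μ*(c:ℂ)))‖ ≤ Real.exp (2*d) := by
  rw [Complex.norm_exp]
  apply Real.exp_le_exp.mpr
  have hre : (2*Complex.I*μ*(c:ℂ)).re = -(2*μ.im*c) := by
    simp [Complex.mul_re, Complex.mul_im]
  rw [Complex.neg_re, hre]
  have hd := abs_le.mp hμ
  have hd0 : 0 ≤ d := (abs_nonneg _).trans hμ
  nlinarith [hd.1, hd.2]

/-- The innermost primitive `A₂`. -/
def myA2 (σ₂ : ℝ → ℂ) (μ : ℂ) : ℝ → ℂ := fun s =>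
  ∫ y in (0:ℝ)..s, Complex.exp (2*Complex.I*μ*y) * σ₂ y

/-- The primitive `B`. -/
def myB (σ₁ σ₂ : ℝ → ℂ) (μ : ℂ) : ℝ → ℂ := fun s =>
  ∫ τ in (0:ℝ)..s, (Complex.exp (-(2*Complex.I*μ*τ)) * σ₁ τ) * myA2 σ₂ μ τ

/-- The primitive `F`. -/
def myF (σ₁ σ₂ : ℝ → ℂ) (μ : ℂ) : ℝ → ℂ := fun t =>
  ∫ s in (0:ℝ)..t, (Complex.exp (2*Complex.I*μ*s) * σ₂ s) * myB σ₁ σ₂ μ s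

set_option maxHeartbeats 2000000

/-- bound for `L(x,μ)` in the strip `|Im μ| ≤ d`. -/
theorem stmt19
    (p : ℝ≥0∞) (hp1 : 1 ≤ p) (hp2 : p < 2)
    (σ₁ σ₂ : ℝ → ℂ) (hσ₁m : Measurable σ₁) (hσ₂m : Measurable σ₂)
    (hσ₁ : MemLp σ₁ p (volume.restrict (Icc (0:ℝ) 1)))
    (hσ₂ : MemLp σ₂ p (volume.restrict (Icc (0:ℝ) 1)))
    (d : ℝ) (hd : 0 < d) :
    ∀ μ : ℂ, |μ.im| ≤ d → ∀ x ∈ Icc (0:ℝ) 1,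
      ‖Lfun σ₁ σ₂ μ x‖
        ≤ 2 * Real.exp (4*d) * (∫ t in (0:ℝ)..1, ‖σ₁ t‖) * alphaT σ₁ σ₂ μ := by
  intro μ hμ x hx
  obtain ⟨hx0, hx1⟩ := hx
  -- basic integrability of σ₁, σ₂ on [0,1]
  haveI : Fact ((volume : Measure ℝ) (Icc (0:ℝ) 1) < ⊤) := ⟨by simp [Real.volume_Icc]⟩
  have hi1 : IntegrableOn σ₁ (Icc (0:ℝ) 1) volume :=
    memLp_one_iff_integrable.mp (hσ₁.mono_exponent hp1)
  have hi2 : IntegrableOn σ₂ (Icc (0:ℝ) 1) volume :=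
    memLp_one_iff_integrable.mp (hσ₂.mono_exponent hp1)
  have h1 : IntervalIntegrable σ₁ volume 0 1 := by
    rw [intervalIntegrable_iff_integrableOn_Ioc_of_le zero_le_one]
    exact hi1.mono_set Ioc_subset_Icc_self
  have h2 : IntervalIntegrable σ₂ volume 0 1 := by
    rw [intervalIntegrable_iff_integrableOn_Ioc_of_le zero_le_one]
    exact hi2.mono_set Ioc_subset_Icc_self
  -- continuity of the exponentials
  have hcp : Continuous fun s : ℝ => Complex.exp (2*Complex.I*μ*s) := by fun_prop
  have hcm : Continuous fun s : ℝ => Complex.exp (-(2*Complex.I*μ*s)) := by fun_prop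
  have hcx : Continuous fun t : ℝ => Complex.exp (2*Complex.I*μ*(x - t)) := by fun_prop
  -- integrable integrands
  have hg2i : IntervalIntegrable (fun s => Complex.exp (2*Complex.I*μ*s) * σ₂ s) volume 0 1 :=
    h2.continuousOn_mul hcp.continuousOn
  have hg1i : IntervalIntegrable (fun s => Complex.exp (2*Complex.I*μ*s) * σ₁ s) volume 0 1 :=
    h1.continuousOn_mul hcp.continuousOn
  have hf1i : IntervalIntegrable (fun s => Complex.exp (-(2*Complex.I*μ*s)) * σ₁ s) volume 0 1 :=
    h1.continuousOn_mul hcm.continuousOn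
  have hf2i : IntervalIntegrable (fun s => Complex.exp (-(2*Complex.I*μ*s)) * σ₂ s) volume 0 1 :=
    h2.continuousOn_mul hcm.continuousOn
  -- continuity of the primitives
  have hA2cU : ContinuousOn (myA2 σ₂ μ) (Set.uIcc (0:ℝ) 1) :=
    intervalIntegral.continuousOn_primitive_interval' hg2i left_mem_uIcc
  have hBinti : IntervalIntegrable
      (fun τ => (Complex.exp (-(2*Complex.I*μ*τ)) * σ₁ τ) * myA2 σ₂ μ τ) volume 0 1 :=
    hf1i.mul_continuousOn hA2cU
  have hBcU : ContinuousOn (myB σ₁ σ₂ μ) (Set.uIcc (0:ℝ) 1) :=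
    intervalIntegral.continuousOn_primitive_interval' hBinti left_mem_uIcc
  have hB2i : IntervalIntegrable
      (fun τ => ((Complex.exp (-(2*Complex.I*μ*τ)) * σ₁ τ) * myA2 σ₂ μ τ) * myA2 σ₂ μ τ)
      volume 0 1 := hBinti.mul_continuousOn hA2cU
  have hFinti : IntervalIntegrable
      (fun s => (Complex.exp (2*Complex.I*μ*s) * σ₂ s) * myB σ₁ σ₂ μ s) volume 0 1 :=
    hg2i.mul_continuousOn hBcU
  have hFcU : ContinuousOn (myF σ₁ σ₂ μ) (Set.uIcc (0:ℝ) 1) :=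
    intervalIntegral.continuousOn_primitive_interval' hFinti left_mem_uIcc
  -- α₀ continuity
  have hc1 : ContinuousOn (fun z => ∫ t in (0:ℝ)..z, Complex.exp (-(2*Complex.I*μ*t)) * σ₁ t)
      (Set.uIcc (0:ℝ) 1) := intervalIntegral.continuousOn_primitive_interval' hf1i left_mem_uIcc
  have hc2 : ContinuousOn (fun z => ∫ t in (0:ℝ)..z, Complex.exp (2*Complex.I*μ*t) * σ₁ t)
      (Set.uIcc (0:ℝ) 1) := intervalIntegral.continuousOn_primitive_interval' hg1i left_mem_uIcc
  have hc3 : ContinuousOn (fun z => ∫ t in (0:ℝ)..z, Complex.exp (-(2*Complex.I*μ*t)) * σ₂ t)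
      (Set.uIcc (0:ℝ) 1) := intervalIntegral.continuousOn_primitive_interval' hf2i left_mem_uIcc
  have hc4 : ContinuousOn (fun z => ∫ t in (0:ℝ)..z, Complex.exp (2*Complex.I*μ*t) * σ₂ t)
      (Set.uIcc (0:ℝ) 1) := intervalIntegral.continuousOn_primitive_interval' hg2i left_mem_uIcc
  have ha0c : ContinuousOn (alpha0 σ₁ σ₂ μ) (Set.uIcc (0:ℝ) 1) :=
    ((hc1.norm.add hc2.norm).add (hc3.norm.add hc4.norm))
  -- integrable real products
  have hJi : IntervalIntegrable (fun s => ‖σ₁ s‖ * ‖myA2 σ₂ μ s‖) volume 0 1 :=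
    h1.norm.mul_continuousOn hA2cU.norm
  have hKi : IntervalIntegrable (fun s => ‖σ₁ s‖ * ‖myA2 σ₂ μ s‖ ^ 2) volume 0 1 :=
    h1.norm.mul_continuousOn (hA2cU.norm.pow 2)
  have hmaxi : IntervalIntegrable (fun s => max ‖σ₁ s‖ ‖σ₂ s‖) volume 0 1 := by
    constructor
    · apply Integrable.mono' ((h1.norm.1).add (h2.norm.1))
        ((hσ₁m.norm.max hσ₂m.norm).aestronglyMeasurable)
      refine ae_of_all _ fun s => ?_
      rw [Real.norm_eq_abs, abs_of_nonneg (le_max_of_le_left (norm_nonneg _))]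
      exact max_le (le_add_of_nonneg_right (norm_nonneg _))
        (le_add_of_nonneg_left (norm_nonneg _))
    · apply Integrable.mono' ((h1.norm.2).add (h2.norm.2))
        ((hσ₁m.norm.max hσ₂m.norm).aestronglyMeasurable)
      refine ae_of_all _ fun s => ?_
      rw [Real.norm_eq_abs, abs_of_nonneg (le_max_of_le_left (norm_nonneg _))]
      exact max_le (le_add_of_nonneg_right (norm_nonneg _))
        (le_add_of_nonneg_left (norm_nonneg _))
  have haTi : IntervalIntegrable (fun s => (max ‖σ₁ s‖ ‖σ₂ s‖) * (alpha0 σ₁ σ₂ μ s)^2)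
      volume 0 1 := hmaxi.mul_continuousOn (ha0c.pow 2)
  -- subinterval inclusion
  have hsub01 : ∀ {a : ℝ}, 0 ≤ a → a ≤ 1 → (Set.uIcc (0:ℝ) a ⊆ Set.uIcc (0:ℝ) 1) := by
    intro a ha0 ha1
    rw [uIcc_of_le ha0, uIcc_of_le zero_le_one]
    exact Icc_subset_Icc le_rfl ha1
  -- nonnegativity
  have hS0 : 0 ≤ ∫ t in (0:ℝ)..1, ‖σ₁ t‖ :=
    intervalIntegral.integral_nonneg zero_le_one (fun s _ => norm_nonneg _)
  have hJ0 : 0 ≤ ∫ s in (0:ℝ)..1, ‖σ₁ s‖ * ‖myA2 σ₂ μ s‖ :=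
    intervalIntegral.integral_nonneg zero_le_one
      (fun s _ => mul_nonneg (norm_nonneg _) (norm_nonneg _))
  have hK0 : 0 ≤ ∫ s in (0:ℝ)..1, ‖σ₁ s‖ * ‖myA2 σ₂ μ s‖ ^ 2 :=
    intervalIntegral.integral_nonneg zero_le_one
      (fun s _ => mul_nonneg (norm_nonneg _) (sq_nonneg _))
  -- Cauchy–Schwarz
  have hCS : (∫ s in (0:ℝ)..1, ‖σ₁ s‖ * ‖myA2 σ₂ μ s‖) ^ 2
      ≤ (∫ s in (0:ℝ)..1, ‖σ₁ s‖) * ∫ s in (0:ℝ)..1, ‖σ₁ s‖ * ‖myA2 σ₂ μ s‖ ^ 2 :=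
    cs_weighted (fun s => norm_nonneg _) h1.norm hJi hKi
  -- K ≤ α̃
  have hA2le : ∀ s : ℝ, ‖myA2 σ₂ μ s‖ ≤ alpha0 σ₁ σ₂ μ s := by
    intro s
    have n1 := norm_nonneg (∫ t in (0:ℝ)..s, Complex.exp (-(2*Complex.I*μ*t)) * σ₁ t)
    have n2 := norm_nonneg (∫ t in (0:ℝ)..s, Complex.exp (2*Complex.I*μ*t) * σ₁ t)
    have n3 := norm_nonneg (∫ t in (0:ℝ)..s, Complex.exp (-(2*Complex.I*μ*t)) * σ₂ t)
    have hrw : ‖myA2 σ₂ μ s‖ = ‖∫ t in (0:ℝ)..s, Complex.exp (2*Complex.I*μ*t) * σ₂ t‖ := rfl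
    rw [hrw]
    unfold alpha0
    linarith
  have hKle : (∫ s in (0:ℝ)..1, ‖σ₁ s‖ * ‖myA2 σ₂ μ s‖ ^ 2) ≤ alphaT σ₁ σ₂ μ := by
    unfold alphaT
    apply intervalIntegral.integral_mono_on zero_le_one hKi haTi
    intro s _
    apply mul_le_mul (le_max_left _ _)
      (pow_le_pow_left₀ (norm_nonneg _) (hA2le s) 2)
      (sq_nonneg _) (le_max_of_le_left (norm_nonneg _))
  -- bound for B
  have hBb : ∀ t, 0 ≤ t → t ≤ 1 → ‖myB σ₁ σ₂ μ t‖
      ≤ Real.exp (2*d) * ∫ s in (0:ℝ)..1, ‖σ₁ s‖ * ‖myA2 σ₂ μ s‖ := by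
    intro t ht0 ht1
    calc ‖myB σ₁ σ₂ μ t‖
        ≤ ∫ τ in (0:ℝ)..t, ‖(Complex.exp (-(2*Complex.I*μ*τ)) * σ₁ τ) * myA2 σ₂ μ τ‖ :=
          intervalIntegral.norm_integral_le_integral_norm ht0
      _ ≤ ∫ τ in (0:ℝ)..t, Real.exp (2*d) * (‖σ₁ τ‖ * ‖myA2 σ₂ μ τ‖) := by
          apply intervalIntegral.integral_mono_on ht0
            ((hBinti.mono_set (hsub01 ht0 ht1)).norm)
            ((hJi.const_mul _).mono_set (hsub01 ht0 ht1))
          intro τ hτ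
          rw [norm_mul, norm_mul, mul_assoc]
          exact mul_le_mul_of_nonneg_right
            (norm_exp_neg_le hμ hτ.1 (hτ.2.trans ht1))
            (mul_nonneg (norm_nonneg _) (norm_nonneg _))
      _ = Real.exp (2*d) * ∫ τ in (0:ℝ)..t, ‖σ₁ τ‖ * ‖myA2 σ₂ μ τ‖ :=
          intervalIntegral.integral_const_mul _ _
      _ ≤ Real.exp (2*d) * ∫ s in (0:ℝ)..1, ‖σ₁ s‖ * ‖myA2 σ₂ μ s‖ := by
          apply mul_le_mul_of_nonneg_left _ (Real.exp_nonneg _)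
          exact intervalIntegral.integral_mono_interval le_rfl ht0 ht1
            (ae_of_all _ fun s => mul_nonneg (norm_nonneg _) (norm_nonneg _)) hJi
  -- bound for ∫ f₁ A₂²
  have hIb : ∀ t, 0 ≤ t → t ≤ 1 →
      ‖∫ s in (0:ℝ)..t, ((Complex.exp (-(2*Complex.I*μ*s)) * σ₁ s) * myA2 σ₂ μ s) * myA2 σ₂ μ s‖
      ≤ Real.exp (2*d) * ∫ s in (0:ℝ)..1, ‖σ₁ s‖ * ‖myA2 σ₂ μ s‖ ^ 2 := by
    intro t ht0 ht1
    calc ‖∫ s in (0:ℝ)..t,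
          ((Complex.exp (-(2*Complex.I*μ*s)) * σ₁ s) * myA2 σ₂ μ s) * myA2 σ₂ μ s‖
        ≤ ∫ s in (0:ℝ)..t,
            ‖((Complex.exp (-(2*Complex.I*μ*s)) * σ₁ s) * myA2 σ₂ μ s) * myA2 σ₂ μ s‖ :=
          intervalIntegral.norm_integral_le_integral_norm ht0
      _ ≤ ∫ s in (0:ℝ)..t, Real.exp (2*d) * (‖σ₁ s‖ * ‖myA2 σ₂ μ s‖ ^ 2) := by
          apply intervalIntegral.integral_mono_on ht0
            ((hB2i.mono_set (hsub01 ht0 ht1)).norm)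
            ((hKi.const_mul _).mono_set (hsub01 ht0 ht1))
          intro s hs
          rw [norm_mul, norm_mul, norm_mul]
          have he := norm_exp_neg_le hμ hs.1 (hs.2.trans ht1)
          have hn : (0:ℝ) ≤ ‖σ₁ s‖ * (‖myA2 σ₂ μ s‖ * ‖myA2 σ₂ μ s‖) :=
            mul_nonneg (norm_nonneg _) (mul_nonneg (norm_nonneg _) (norm_nonneg _))
          nlinarith [he, hn, norm_nonneg (Complex.exp (-(2*Complex.I*μ*(s:ℂ))))]
      _ = Real.exp (2*d) * ∫ s in (0:ℝ)..t, ‖σ₁ s‖ * ‖myA2 σ₂ μ s‖ ^ 2 :=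
          intervalIntegral.integral_const_mul _ _
      _ ≤ Real.exp (2*d) * ∫ s in (0:ℝ)..1, ‖σ₁ s‖ * ‖myA2 σ₂ μ s‖ ^ 2 := by
          apply mul_le_mul_of_nonneg_left _ (Real.exp_nonneg _)
          exact intervalIntegral.integral_mono_interval le_rfl ht0 ht1
            (ae_of_all _ fun s => mul_nonneg (norm_nonneg _) (sq_nonneg _)) hKi
  -- the Fubini identity for F
  have hFb : ∀ t, 0 ≤ t → t ≤ 1 → ‖myF σ₁ σ₂ μ t‖
      ≤ ‖myA2 σ₂ μ t‖ * (Real.exp (2*d) * ∫ s in (0:ℝ)..1, ‖σ₁ s‖ * ‖myA2 σ₂ μ s‖)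
        + Real.exp (2*d) * ∫ s in (0:ℝ)..1, ‖σ₁ s‖ * ‖myA2 σ₂ μ s‖ ^ 2 := by
    intro t ht0 ht1
    have hident : myF σ₁ σ₂ μ t = myA2 σ₂ μ t * myB σ₁ σ₂ μ t
        - ∫ s in (0:ℝ)..t,
            ((Complex.exp (-(2*Complex.I*μ*s)) * σ₁ s) * myA2 σ₂ μ s) * myA2 σ₂ μ s := by
      have hfb := fubini_prim (u := fun s => Complex.exp (2*Complex.I*μ*s) * σ₂ s)
        (v := fun τ => (Complex.exp (-(2*Complex.I*μ*τ)) * σ₁ τ) * myA2 σ₂ μ τ) ht0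
        (hg2i.mono_set (hsub01 ht0 ht1)) (hBinti.mono_set (hsub01 ht0 ht1))
      exact eq_sub_of_add_eq hfb
    rw [hident]
    calc ‖myA2 σ₂ μ t * myB σ₁ σ₂ μ t - _‖
        ≤ ‖myA2 σ₂ μ t * myB σ₁ σ₂ μ t‖ + ‖∫ s in (0:ℝ)..t,
            ((Complex.exp (-(2*Complex.I*μ*s)) * σ₁ s) * myA2 σ₂ μ s) * myA2 σ₂ μ s‖ :=
          norm_sub_le _ _
      _ ≤ _ := by
          rw [norm_mul]
          exact add_le_add
            (mul_le_mul_of_nonneg_left (hBb t ht0 ht1) (norm_nonneg _))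
            (hIb t ht0 ht1)
  -- rewriting Lfun
  have harg : ∀ s τ : ℝ, Complex.exp (2*Complex.I*μ*(s - τ))
      = Complex.exp (2*Complex.I*μ*s) * Complex.exp (-(2*Complex.I*μ*τ)) := by
    intro s τ
    rw [← Complex.exp_add]
    congr 1
    push_cast
    ring
  have hinner : ∀ s : ℝ,
      (∫ τ in (0:ℝ)..s, Complex.exp (2*Complex.I*μ*(s - τ)) * σ₁ τ *
        ∫ y in (0:ℝ)..τ, Complex.exp (2*Complex.I*μ*y) * σ₂ y)
      = Complex.exp (2*Complex.I*μ*s) * myB σ₁ σ₂ μ s := by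
    intro s
    have hBdef : myB σ₁ σ₂ μ s
        = ∫ τ in (0:ℝ)..s, (Complex.exp (-(2*Complex.I*μ*τ)) * σ₁ τ) * myA2 σ₂ μ τ := rfl
    rw [hBdef, ← intervalIntegral.integral_const_mul]
    refine intervalIntegral.integral_congr fun τ _ => ?_
    show Complex.exp (2*Complex.I*μ*(s - τ)) * σ₁ τ *
        (∫ y in (0:ℝ)..τ, Complex.exp (2*Complex.I*μ*y) * σ₂ y)
      = Complex.exp (2*Complex.I*μ*s) *
        ((Complex.exp (-(2*Complex.I*μ*τ)) * σ₁ τ) * myA2 σ₂ μ τ)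
    have hA2def : myA2 σ₂ μ τ = ∫ y in (0:ℝ)..τ, Complex.exp (2*Complex.I*μ*y) * σ₂ y := rfl
    rw [hA2def, harg s τ]
    ring
  have hLrw : Lfun σ₁ σ₂ μ x
      = ∫ t in (0:ℝ)..x, Complex.exp (2*Complex.I*μ*(x - t)) * σ₁ t * myF σ₁ σ₂ μ t := by
    unfold Lfun
    refine intervalIntegral.integral_congr fun t _ => ?_
    show Complex.exp (2*Complex.I*μ*(x - t)) * σ₁ t *
        (∫ s in (0:ℝ)..t, σ₂ s *
          ∫ τ in (0:ℝ)..s, Complex.exp (2*Complex.I*μ*(s - τ)) * σ₁ τ *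
            ∫ y in (0:ℝ)..τ, Complex.exp (2*Complex.I*μ*y) * σ₂ y)
      = Complex.exp (2*Complex.I*μ*(x - t)) * σ₁ t * myF σ₁ σ₂ μ t
    congr 1
    have hFdef : myF σ₁ σ₂ μ t
        = ∫ s in (0:ℝ)..t, (Complex.exp (2*Complex.I*μ*s) * σ₂ s) * myB σ₁ σ₂ μ s := rfl
    rw [hFdef]
    refine intervalIntegral.integral_congr fun s _ => ?_
    show σ₂ s * (∫ τ in (0:ℝ)..s, Complex.exp (2*Complex.I*μ*(s - τ)) * σ₁ τ *
            ∫ y in (0:ℝ)..τ, Complex.exp (2*Complex.I*μ*y) * σ₂ y)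
      = (Complex.exp (2*Complex.I*μ*s) * σ₂ s) * myB σ₁ σ₂ μ s
    rw [hinner s]
    ring
  -- exponential bound for the outer factor
  have hEx : ∀ t, 0 ≤ t → t ≤ x → ‖Complex.exp (2*Complex.I*μ*(x - t))‖ ≤ Real.exp (2*d) := by
    intro t ht0 htx
    have hco : (2*Complex.I*μ*((x:ℂ) - (t:ℂ))) = 2*Complex.I*μ*(((x - t : ℝ)):ℂ) := by
      push_cast
      ring
    rw [hco]
    exact norm_exp_pos_le hμ (by linarith) (by linarith)
  -- integrability of the two integrands in the main comparison
  have hLHSi : IntervalIntegrable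
      (fun t => ‖Complex.exp (2*Complex.I*μ*(x - t)) * σ₁ t * myF σ₁ σ₂ μ t‖) volume 0 x :=
    (((h1.continuousOn_mul hcx.continuousOn).mul_continuousOn hFcU).norm).mono_set
      (hsub01 hx0 hx1)
  have hRHSi : IntervalIntegrable
      (fun t => Real.exp (2*d) * (‖σ₁ t‖ *
        (‖myA2 σ₂ μ t‖ * (Real.exp (2*d) * ∫ s in (0:ℝ)..1, ‖σ₁ s‖ * ‖myA2 σ₂ μ s‖)
          + Real.exp (2*d) * ∫ s in (0:ℝ)..1, ‖σ₁ s‖ * ‖myA2 σ₂ μ s‖ ^ 2))) volume 0 x :=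
    (((h1.norm.mul_continuousOn
      (((hA2cU.norm.mul continuousOn_const).add continuousOn_const))).const_mul _).mono_set
      (hsub01 hx0 hx1))
  -- main chain
  rw [hLrw]
  calc ‖∫ t in (0:ℝ)..x, Complex.exp (2*Complex.I*μ*(x - t)) * σ₁ t * myF σ₁ σ₂ μ t‖
      ≤ ∫ t in (0:ℝ)..x, ‖Complex.exp (2*Complex.I*μ*(x - t)) * σ₁ t * myF σ₁ σ₂ μ t‖ :=
        intervalIntegral.norm_integral_le_integral_norm hx0
    _ ≤ ∫ t in (0:ℝ)..x, Real.exp (2*d) * (‖σ₁ t‖ *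
          (‖myA2 σ₂ μ t‖ * (Real.exp (2*d) * ∫ s in (0:ℝ)..1, ‖σ₁ s‖ * ‖myA2 σ₂ μ s‖)
            + Real.exp (2*d) * ∫ s in (0:ℝ)..1, ‖σ₁ s‖ * ‖myA2 σ₂ μ s‖ ^ 2)) := by
        apply intervalIntegral.integral_mono_on hx0 hLHSi hRHSi
        intro t ht
        rw [norm_mul, norm_mul, mul_assoc]
        apply mul_le_mul (hEx t ht.1 ht.2)
          (mul_le_mul_of_nonneg_left (hFb t ht.1 (ht.2.trans hx1)) (norm_nonneg _))
          (mul_nonneg (norm_nonneg _) (norm_nonneg _)) (Real.exp_nonneg _)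
    _ = (Real.exp (2*d) * (Real.exp (2*d) * ∫ s in (0:ℝ)..1, ‖σ₁ s‖ * ‖myA2 σ₂ μ s‖))
          * (∫ t in (0:ℝ)..x, ‖σ₁ t‖ * ‖myA2 σ₂ μ t‖)
        + (Real.exp (2*d) * (Real.exp (2*d) * ∫ s in (0:ℝ)..1, ‖σ₁ s‖ * ‖myA2 σ₂ μ s‖ ^ 2))
          * (∫ t in (0:ℝ)..x, ‖σ₁ t‖) := by
        have hcongr : (∫ t in (0:ℝ)..x, Real.exp (2*d) * (‖σ₁ t‖ *
              (‖myA2 σ₂ μ t‖ * (Real.exp (2*d) * ∫ s in (0:ℝ)..1, ‖σ₁ s‖ * ‖myA2 σ₂ μ s‖)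
                + Real.exp (2*d) * ∫ s in (0:ℝ)..1, ‖σ₁ s‖ * ‖myA2 σ₂ μ s‖ ^ 2)))
            = ∫ t in (0:ℝ)..x,
              ((Real.exp (2*d) * (Real.exp (2*d) * ∫ s in (0:ℝ)..1, ‖σ₁ s‖ * ‖myA2 σ₂ μ s‖))
                  * (‖σ₁ t‖ * ‖myA2 σ₂ μ t‖)
                + (Real.exp (2*d) * (Real.exp (2*d) * ∫ s in (0:ℝ)..1, ‖σ₁ s‖ * ‖myA2 σ₂ μ s‖ ^ 2))
                  * ‖σ₁ t‖) :=
          intervalIntegral.integral_congr fun t _ => by ring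
        rw [hcongr, intervalIntegral.integral_add
            ((hJi.mono_set (hsub01 hx0 hx1)).const_mul _)
            ((h1.norm.mono_set (hsub01 hx0 hx1)).const_mul _),
          intervalIntegral.integral_const_mul, intervalIntegral.integral_const_mul]
    _ ≤ (Real.exp (2*d) * (Real.exp (2*d) * ∫ s in (0:ℝ)..1, ‖σ₁ s‖ * ‖myA2 σ₂ μ s‖))
          * (∫ s in (0:ℝ)..1, ‖σ₁ s‖ * ‖myA2 σ₂ μ s‖)
        + (Real.exp (2*d) * (Real.exp (2*d) * ∫ s in (0:ℝ)..1, ‖σ₁ s‖ * ‖myA2 σ₂ μ s‖ ^ 2))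
          * (∫ t in (0:ℝ)..1, ‖σ₁ t‖) := by
        apply add_le_add
        · apply mul_le_mul_of_nonneg_left _ (by positivity)
          exact intervalIntegral.integral_mono_interval le_rfl hx0 hx1
            (ae_of_all _ fun s => mul_nonneg (norm_nonneg _) (norm_nonneg _)) hJi
        · apply mul_le_mul_of_nonneg_left _ (by positivity)
          exact intervalIntegral.integral_mono_interval le_rfl hx0 hx1
            (ae_of_all _ fun s => norm_nonneg _) h1.norm
    _ ≤ 2 * Real.exp (4*d) * (∫ t in (0:ℝ)..1, ‖σ₁ t‖) * alphaT σ₁ σ₂ μ := by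
        have h4d : Real.exp (2*d) * Real.exp (2*d) = Real.exp (4*d) := by
          rw [← Real.exp_add]; ring_nf
        set S := ∫ t in (0:ℝ)..1, ‖σ₁ t‖ with hSdef
        set J := ∫ s in (0:ℝ)..1, ‖σ₁ s‖ * ‖myA2 σ₂ μ s‖ with hJdef
        set K := ∫ s in (0:ℝ)..1, ‖σ₁ s‖ * ‖myA2 σ₂ μ s‖ ^ 2 with hKdef
        set E := Real.exp (2*d) with hEdef
        set aT := alphaT σ₁ σ₂ μ with haTdef
        have hJJ : J * J ≤ S * K := by nlinarith [hCS]
        have hSK : S * K ≤ S * aT := mul_le_mul_of_nonneg_left hKle hS0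
        have hint1 : E * E * (J * J) ≤ E * E * (S * K) :=
          mul_le_mul_of_nonneg_left hJJ (mul_self_nonneg E)
        have hint2 : 2 * (E * E) * (S * K) ≤ 2 * (E * E) * (S * aT) :=
          mul_le_mul_of_nonneg_left hSK (by positivity)
        have hint3 : 2 * (E * E) * (S * aT) = 2 * Real.exp (4*d) * (S * aT) := by
          rw [h4d]
        nlinarith [hint1, hint2, hint3]
end
end
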